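/- arXiv:1705.05353 — 6 statements merged into one kernel-verified Lean document; each statement's English description precedes it below -/
import Mathlib

section
/- Let n ≥ 1 and let u_{i,j} ∈ ℂ (for 1 ≤ i < j ≤ n) and b_i ∈ [0,∞) (for 1 ≤ i ≤ n) be numbers satisfying the complex stability condition: for every subset I ⊆ {1,…,n}, ∑_{i,j ∈ I, i<j} Re u_{i,j} ≥ −∑_{i ∈ I} b_i. Then |∑_{g ∈ 𝒞_n} ∏_{ij ∈ g} (e^{−u_{i,j}} − 1)| ≤ e^{∑_{i=1}^n b_i} · ∑_{t ∈ 𝒯_n} ∏_{ij ∈ t} |1 − e^{−|Re u_{i,j}| + i·Im u_{i,j}}|. -/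
open scoped Classical

open SimpleGraph Finset


variable {n : ℕ}

lemma reachable_of_reachable_sub {g g' : SimpleGraph (Fin n)}
    (hadj : ∀ a b, g.Adj a b → g'.Reachable a b) {u v : Fin n} (h : g.Reachable u v) :
    g'.Reachable u v := by
  obtain ⟨p⟩ := h
  induction p with
  | nil => exact Reachable.refl _
  | cons h q ih => exact (hadj _ _ h).trans ih

lemma exists_tree_le_aux : ∀ (k : ℕ) (g : SimpleGraph (Fin n)), g.edgeSet.ncard ≤ k →
    g.Connected → ∃ T, T ≤ g ∧ T.IsTree := by
  intro k
  induction k with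
  | zero =>
    intro g hcard hg
    refine ⟨g, le_refl _, hg, ?_⟩
    intro v c hc
    have hne : c.edges ≠ [] := by
      intro h
      have := hc.three_le_length
      have := c.length_edges
      simp [h] at this
      omega
    obtain ⟨e, he⟩ := List.exists_mem_of_ne_nil _ hne
    have h1 : e ∈ g.edgeSet := c.edges_subset_edgeSet he
    have h0 : g.edgeSet = ∅ := by
      rw [← Set.ncard_eq_zero (Set.toFinite _)]; omega
    rw [h0] at h1; exact h1
  | succ k ih =>
    intro g hcard hg
    by_cases ha : g.IsAcyclic
    · exact ⟨g, le_refl _, hg, ha⟩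
    · rw [isAcyclic_iff_forall_edge_isBridge] at ha
      push_neg at ha
      obtain ⟨e, he, hbr⟩ := ha
      induction e using Sym2.ind with
      | _ x y =>
      rw [isBridge_iff] at hbr
      push_neg at hbr
      have hreach : (g \ fromEdgeSet {s(x, y)}).Reachable x y := hbr
      set g' := g \ fromEdgeSet {s(x, y)} with hg'
      have hle : g' ≤ g := sdiff_le
      have hconn : g'.Connected := by
        have hne : Nonempty (Fin n) := hg.nonempty
        refine Connected.mk ?_
        intro u v
        have : g.Reachable u v := hg.preconnected u v
        refine reachable_of_reachable_sub (fun a b hab => ?_) this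
        by_cases hab' : s(a, b) = s(x, y)
        · rw [Sym2.eq_iff] at hab'
          rcases hab' with ⟨rfl, rfl⟩ | ⟨rfl, rfl⟩
          · exact hreach
          · exact hreach.symm
        · exact Adj.reachable (by simp [hg', sdiff_adj, hab, fromEdgeSet_adj, hab'])
      have hadjxy : g.Adj x y := (g.mem_edgeSet).mp he
      have hnotadj : ¬ g'.Adj x y := by
        rw [hg', sdiff_adj]
        rintro ⟨_, h2⟩
        exact h2 (by simp [hadjxy.ne])
      have hcard' : g'.edgeSet.ncard ≤ k := by
        have hss : g'.edgeSet ⊂ g.edgeSet := by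
          refine ⟨edgeSet_mono hle, fun hsub => ?_⟩
          exact hnotadj ((g'.mem_edgeSet).mp (hsub he))
        have := Set.ncard_lt_ncard hss (Set.toFinite _)
        omega
      obtain ⟨T, hT1, hT2⟩ := ih g' hcard' hconn
      exact ⟨T, hT1.trans hle, hT2⟩

lemma exists_tree_le (g : SimpleGraph (Fin n)) (hg : g.Connected) :
    ∃ T, T ≤ g ∧ T.IsTree :=
  exists_tree_le_aux g.edgeSet.ncard g le_rfl hg

lemma edgeFinset_card_eq (g : SimpleGraph (Fin n)) [Fintype g.edgeSet] :
    g.edgeFinset.card = g.edgeSet.ncard := (Set.ncard_eq_toFinset_card' _).symm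

lemma tree_ncard {T : SimpleGraph (Fin n)} (hT : T.IsTree) : T.edgeSet.ncard + 1 = n := by
  have := hT.card_edgeFinset
  rwa [edgeFinset_card_eq, Fintype.card_fin] at this

lemma connected_card_le {g : SimpleGraph (Fin n)} (hg : g.Connected) :
    n ≤ g.edgeSet.ncard + 1 := by
  obtain ⟨T, hle, hT⟩ := exists_tree_le g hg
  have h1 := tree_ncard hT
  have h2 : T.edgeSet.ncard ≤ g.edgeSet.ncard :=
    Set.ncard_le_ncard (edgeSet_mono hle) (Set.toFinite _)
  omega

lemma isTree_of_connected_card {g : SimpleGraph (Fin n)} (hg : g.Connected)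
    (hcard : g.edgeSet.ncard + 1 ≤ n) : g.IsTree := by
  obtain ⟨T, hle, hT⟩ := exists_tree_le g hg
  have h1 := tree_ncard hT
  have h2 : g.edgeSet = T.edgeSet := by
    refine (Set.eq_of_subset_of_ncard_le (edgeSet_mono hle) ?_ (Set.toFinite _)).symm
    omega
  have : g = T := edgeSet_injective h2
  rwa [this]

lemma walk_split {T : SimpleGraph (Fin n)} {x y : Fin n} {f : Sym2 (Fin n)}
    (p : T.Walk x y) (hp : p.IsPath) (hf : f ∈ p.edges) :
    ∃ a b, f = s(a, b) ∧ (T \ fromEdgeSet {f}).Reachable x a ∧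
      (T \ fromEdgeSet {f}).Reachable b y := by
  induction p with
  | nil => simp at hf
  | @cons x x₁ y h q ih =>
    rw [SimpleGraph.Walk.edges_cons, List.mem_cons] at hf
    have hnodup := hp.edges_nodup
    rw [SimpleGraph.Walk.edges_cons] at hnodup
    have hhead : s(x, x₁) ∉ q.edges := (List.nodup_cons.1 hnodup).1
    rcases hf with hf | hf
    · refine ⟨x, x₁, hf, Reachable.refl _, ?_⟩
      refine SimpleGraph.Walk.reachable (q.transfer _ ?_)
      intro e hq
      rw [edgeSet_sdiff]
      refine ⟨q.edges_subset_edgeSet hq, ?_⟩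
      rw [edgeSet_fromEdgeSet]
      rintro ⟨he1, -⟩
      rw [Set.mem_singleton_iff] at he1
      subst he1
      rw [← hf] at hhead
      exact hhead hq
    · obtain ⟨a, b, hab, hra, hrb⟩ := ih ((SimpleGraph.Walk.cons_isPath_iff _ _).1 hp).1 hf
      have hne : s(x, x₁) ≠ f := fun hcontra => hhead (hcontra ▸ hf)
      have hadj : (T \ fromEdgeSet {f}).Adj x x₁ := by
        rw [sdiff_adj]
        exact ⟨h, fun hc => hne ((fromEdgeSet_adj _).1 hc).1⟩
      exact ⟨a, b, hab, hadj.reachable.trans hra, hrb⟩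

lemma exchange {T : SimpleGraph (Fin n)} (hT : T.IsTree) {x y : Fin n} (hxy : x ≠ y)
    (hnadj : ¬ T.Adj x y) {p : T.Walk x y} (hp : p.IsPath) {f : Sym2 (Fin n)}
    (hf : f ∈ p.edges) :
    ((T \ fromEdgeSet {f}) ⊔ fromEdgeSet {s(x, y)}).IsTree ∧
      ((T \ fromEdgeSet {f}) ⊔ fromEdgeSet {s(x, y)}).edgeSet
        = insert s(x, y) (T.edgeSet \ {f}) := by
  set T'' := T \ fromEdgeSet {f} with hT''
  set T' := T'' ⊔ fromEdgeSet {s(x, y)} with hT'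
  have hdiag : ¬ (s(x, y) : Sym2 (Fin n)).IsDiag := by simp [hxy]
  have hfT : f ∈ T.edgeSet := p.edges_subset_edgeSet hf
  have hedge : T'.edgeSet = insert s(x, y) (T.edgeSet \ {f}) := by
    rw [hT', edgeSet_sup, hT'', edgeSet_sdiff, edgeSet_fromEdgeSet, edgeSet_fromEdgeSet]
    have hfd : ¬ f.IsDiag := SimpleGraph.not_isDiag_of_mem_edgeSet _ hfT
    ext e
    simp only [Set.mem_union, Set.mem_diff, Set.mem_singleton_iff, Set.mem_insert_iff,
      Set.mem_setOf_eq]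
    constructor
    · rintro (⟨h1, h2⟩ | ⟨h1, h2⟩)
      · exact Or.inr ⟨h1, fun hc => h2 ⟨hc, hc ▸ hfd⟩⟩
      · exact Or.inl h1
    · rintro (h1 | ⟨h1, h2⟩)
      · exact Or.inr ⟨h1, h1 ▸ hdiag⟩
      · exact Or.inl ⟨h1, fun hc => h2 hc.1⟩
  have hle'' : T'' ≤ T' := le_sup_left
  have hexy : T'.Adj x y := (sup_adj _ _ _ _).2 (Or.inr ((fromEdgeSet_adj _).2 ⟨rfl, hxy⟩))
  obtain ⟨a, b, hab, hra, hrb⟩ := walk_split p hp hf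
  have hax : T'.Reachable a x := ((hra.mono hle'')).symm
  have hbx : T'.Reachable b x := ((hrb.mono hle'')).trans hexy.symm.reachable
  have hkey : ∀ v, T'.Reachable v x := by
    intro v
    obtain ⟨q0⟩ := hT.isConnected.preconnected v x
    set qp : T.Path v x := q0.toPath with hqp
    set q : T.Walk v x := ↑qp with hq
    by_cases hfq : f ∈ q.edges
    · obtain ⟨a', b', hab', hva', hb'x⟩ := walk_split q qp.isPath hfq
      have hva'T : T'.Reachable v a' := hva'.mono hle''
      rw [hab] at hab'
      rw [Sym2.eq_iff] at hab'
      rcases hab' with ⟨rfl, rfl⟩ | ⟨rfl, rfl⟩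
      · exact hva'T.trans hax
      · exact hva'T.trans hbx
    · refine Reachable.mono hle'' (SimpleGraph.Walk.reachable (q.transfer T'' ?_))
      intro e heq
      rw [hT'', edgeSet_sdiff]
      refine ⟨q.edges_subset_edgeSet heq, ?_⟩
      rw [edgeSet_fromEdgeSet]
      rintro ⟨he1, -⟩
      rw [Set.mem_singleton_iff] at he1
      exact hfq (he1 ▸ heq)
  have hconn : T'.Connected := by
    have hne : Nonempty (Fin n) := hT.isConnected.nonempty
    exact Connected.mk (fun u v => (hkey u).trans (hkey v).symm)
  have hcard : T'.edgeSet.ncard + 1 ≤ n := by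
    rw [hedge]
    have hsxy : s(x, y) ∉ T.edgeSet \ {f} := fun hc => hnadj ((T.mem_edgeSet).1 hc.1)
    rw [Set.ncard_insert_of_notMem hsxy ((Set.toFinite _).diff)]
    rw [Set.ncard_diff_singleton_of_mem hfT]
    have h1 := tree_ncard hT
    have hpos : 0 < T.edgeSet.ncard := by
      rw [Set.ncard_pos (Set.toFinite _)]
      exact ⟨f, hfT⟩
    omega
  exact ⟨isTree_of_connected_card hconn hcard, hedge⟩

noncomputable def ekey (w : Sym2 (Fin n) → ℝ) (e : Sym2 (Fin n)) : ℝ ×ₗ ℕ :=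
  toLex (w e, ((Fintype.equivFin (Sym2 (Fin n))) e : ℕ))

lemma ekey_inj (w : Sym2 (Fin n) → ℝ) : Function.Injective (ekey w) := by
  intro e f h
  have h2 := congrArg (fun p => (ofLex p).2) h
  simpa using (Fintype.equivFin (Sym2 (Fin n))).injective (Fin.ext h2)

lemma w_le_of_ekey_lt {w : Sym2 (Fin n) → ℝ} {e f : Sym2 (Fin n)}
    (h : ekey w e < ekey w f) : w e ≤ w f := by
  rw [ekey, ekey, Prod.Lex.lt_iff] at h
  rcases h with h | ⟨h, -⟩
  · exact le_of_lt h
  · exact le_of_eq h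

noncomputable def rank (w : Sym2 (Fin n) → ℝ) (e : Sym2 (Fin n)) : ℕ :=
  (univ.filter (fun f => ekey w f < ekey w e)).card

lemma rank_lt {w : Sym2 (Fin n) → ℝ} {e f : Sym2 (Fin n)}
    (h : ekey w e < ekey w f) : rank w e < rank w f := by
  refine card_lt_card ⟨fun a ha => ?_, fun hsub => ?_⟩
  · rw [mem_filter] at ha ⊢
    exact ⟨ha.1, ha.2.trans h⟩
  · have : e ∈ univ.filter (fun f' => ekey w f' < ekey w f) := mem_filter.2 ⟨mem_univ _, h⟩
    have := hsub this
    rw [mem_filter] at this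
    exact lt_irrefl _ this.2

noncomputable def nu (w : Sym2 (Fin n) → ℝ) (T : SimpleGraph (Fin n)) : ℕ :=
  ∑ e ∈ univ.filter (fun e => e ∈ T.edgeSet), 2 ^ rank w e

def econd (w : Sym2 (Fin n) → ℝ) (T : SimpleGraph (Fin n)) (e : Sym2 (Fin n)) : Prop :=
  ∀ ⦃x y : Fin n⦄, e = s(x, y) → ∀ p : T.Walk x y, p.IsPath → ∀ f ∈ p.edges,
    ekey w f < ekey w e

def good (w : Sym2 (Fin n) → ℝ) (g T : SimpleGraph (Fin n)) : Prop :=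
  T.IsTree ∧ T ≤ g ∧ ∀ e ∈ g.edgeSet, e ∉ T.edgeSet → econd w T e

lemma exists_good (w : Sym2 (Fin n) → ℝ) {g : SimpleGraph (Fin n)} (hg : g.Connected) :
    ∃ T, good w g T := by
  set S : Finset (SimpleGraph (Fin n)) :=
    univ.filter (fun T => T ≤ g ∧ T.IsTree) with hS
  have hne : S.Nonempty := by
    obtain ⟨T, h1, h2⟩ := exists_tree_le g hg
    exact ⟨T, mem_filter.2 ⟨mem_univ _, h1, h2⟩⟩
  obtain ⟨T, hTS, hmin⟩ := Finset.exists_min_image S (nu w) hne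
  rw [hS, mem_filter] at hTS
  obtain ⟨-, hTg, hT⟩ := hTS
  refine ⟨T, hT, hTg, ?_⟩
  intro e heg heT
  by_contra hcond
  rw [econd] at hcond
  push_neg at hcond
  obtain ⟨x, y, hexy, p, hp, f, hfp, hnlt⟩ := hcond
  have hfT : f ∈ T.edgeSet := p.edges_subset_edgeSet hfp
  have hfe : f ≠ e := fun hc => heT (hc ▸ hfT)
  have helt : ekey w e < ekey w f :=
    lt_of_le_of_ne hnlt (fun hc => hfe (ekey_inj w hc).symm)
  have hxy : x ≠ y := by
    intro hc
    apply SimpleGraph.not_isDiag_of_mem_edgeSet g heg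
    rw [hexy]; exact Sym2.mk_isDiag_iff.2 hc
  have hnadj : ¬ T.Adj x y := fun hc => heT (hexy ▸ (T.mem_edgeSet).2 hc)
  obtain ⟨hT', hedge'⟩ := exchange hT hxy hnadj hp hfp
  set T' := (T \ fromEdgeSet {f}) ⊔ fromEdgeSet {s(x, y)} with hT'def
  have hT'g : T' ≤ g := by
    rw [← edgeSet_subset_edgeSet, hedge']
    intro a ha
    rcases Set.mem_insert_iff.1 ha with rfl | ⟨h1, -⟩
    · exact hexy ▸ heg
    · exact edgeSet_mono hTg h1
  have hnotmem : e ∉ (univ.filter (fun a => a ∈ T.edgeSet)).erase f := by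
    simp only [mem_erase, mem_filter]
    exact fun hc => heT hc.2.2
  have hnuT : nu w T = 2 ^ rank w f + ∑ a ∈ (univ.filter (fun a => a ∈ T.edgeSet)).erase f,
      2 ^ rank w a := by
    rw [nu]
    exact (Finset.add_sum_erase _ _ (mem_filter.2 ⟨mem_univ _, hfT⟩)).symm
  have hnuT' : nu w T' = 2 ^ rank w e + ∑ a ∈ (univ.filter (fun a => a ∈ T.edgeSet)).erase f,
      2 ^ rank w a := by
    rw [nu]
    refine (Finset.sum_congr ?_ (fun a _ => rfl)).trans (Finset.sum_insert hnotmem)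
    ext a
    simp only [mem_filter, mem_univ, true_and, mem_insert, mem_erase, hedge',
      Set.mem_insert_iff, Set.mem_diff, Set.mem_singleton_iff]
    rw [← hexy]
    tauto
  have hlt : nu w T' < nu w T := by
    rw [hnuT, hnuT']
    have := rank_lt helt
    have h2 : (2:ℕ) ^ rank w e < 2 ^ rank w f := Nat.pow_lt_pow_right (by norm_num) this
    omega
  have := hmin T' (mem_filter.2 ⟨mem_univ _, hT'g, hT'⟩)
  omega

lemma good_unique_aux (w : Sym2 (Fin n) → ℝ) {g T₁ T₂ : SimpleGraph (Fin n)}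
    (h₁ : good w g T₁) (h₂ : good w g T₂) {e : Sym2 (Fin n)}
    (he1 : e ∈ T₁.edgeSet) (he2 : e ∉ T₂.edgeSet)
    (hmin : ∀ f, f ∈ T₂.edgeSet → f ∉ T₁.edgeSet → ¬ ekey w f < ekey w e) : False := by
  induction e using Sym2.ind with
  | _ x y =>
  have hxy : x ≠ y := fun hc =>
    SimpleGraph.not_isDiag_of_mem_edgeSet _ he1 (Sym2.mk_isDiag_iff.2 hc)
  have heg : s(x, y) ∈ g.edgeSet := edgeSet_mono h₁.2.1 he1
  have hcond := h₂.2.2 _ heg he2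
  obtain ⟨p0⟩ := h₂.1.isConnected.preconnected x y
  set pp : T₂.Path x y := p0.toPath with hpp
  set p : T₂.Walk x y := ↑pp with hpdef
  have hall := hcond rfl p pp.isPath
  have hex : ∃ f ∈ p.edges, f ∉ T₁.edgeSet := by
    by_contra hc
    push_neg at hc
    have hsub : ∀ f ∈ p.edges, f ∈ T₁.edgeSet := hc
    have hp' : (p.transfer T₁ hsub).IsPath := pp.isPath.transfer hsub
    have hadj : T₁.Adj x y := (T₁.mem_edgeSet).1 he1
    have hequal := h₁.1.IsAcyclic.path_unique ⟨p.transfer T₁ hsub, hp'⟩ (Path.singleton hadj)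
    have hval : p.transfer T₁ hsub = SimpleGraph.Walk.cons hadj SimpleGraph.Walk.nil := by
      simpa [Path.singleton] using congrArg Subtype.val hequal
    have hmem : s(x, y) ∈ (p.transfer T₁ hsub).edges := by
      rw [hval]; simp
    rw [SimpleGraph.Walk.edges_transfer] at hmem
    exact he2 (p.edges_subset_edgeSet hmem)
  obtain ⟨f, hfp, hfT₁⟩ := hex
  exact hmin f (p.edges_subset_edgeSet hfp) hfT₁ (hall f hfp)

lemma good_unique (w : Sym2 (Fin n) → ℝ) {g T₁ T₂ : SimpleGraph (Fin n)}
    (h₁ : good w g T₁) (h₂ : good w g T₂) : T₁ = T₂ := by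
  by_contra hne
  set D : Finset (Sym2 (Fin n)) := univ.filter
    (fun e => (e ∈ T₁.edgeSet ∧ e ∉ T₂.edgeSet) ∨ (e ∈ T₂.edgeSet ∧ e ∉ T₁.edgeSet)) with hD
  have hDne : D.Nonempty := by
    by_contra hc
    rw [Finset.not_nonempty_iff_eq_empty] at hc
    apply hne
    apply edgeSet_injective
    ext a
    have : a ∉ D := by rw [hc]; exact notMem_empty _
    rw [hD, mem_filter] at this
    push_neg at this
    have := this (mem_univ _)
    tauto
  obtain ⟨e, heD, hmin⟩ := Finset.exists_min_image D (ekey w) hDne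
  rw [hD, mem_filter] at heD
  rcases heD.2 with ⟨he1, he2⟩ | ⟨he1, he2⟩
  · exact good_unique_aux w h₁ h₂ he1 he2 (fun f hf1 hf2 hlt =>
      absurd hlt (not_lt.2 (hmin f (mem_filter.2 ⟨mem_univ _, Or.inr ⟨hf1, hf2⟩⟩))))
  · exact good_unique_aux w h₂ h₁ he1 he2 (fun f hf1 hf2 hlt =>
      absurd hlt (not_lt.2 (hmin f (mem_filter.2 ⟨mem_univ _, Or.inl ⟨hf1, hf2⟩⟩))))
noncomputable def Dset (w : Sym2 (Fin n) → ℝ) (T : SimpleGraph (Fin n)) :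
    Finset (Sym2 (Fin n)) :=
  univ.filter (fun e => ¬ e.IsDiag ∧ e ∉ T.edgeSet ∧ econd w T e)

noncomputable def sch (w : Sym2 (Fin n) → ℝ) (g : SimpleGraph (Fin n)) :
    SimpleGraph (Fin n) :=
  if h : ∃ T, good w g T then h.choose else ⊥

lemma sch_good {w : Sym2 (Fin n) → ℝ} {g : SimpleGraph (Fin n)} (hg : g.Connected) :
    good w g (sch w g) := by
  have h : ∃ T, good w g T := exists_good w hg
  rw [sch, dif_pos h]
  exact h.choose_spec

lemma sch_eq_iff {w : Sym2 (Fin n) → ℝ} {g T : SimpleGraph (Fin n)} (hg : g.Connected) :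
    sch w g = T ↔ good w g T := by
  constructor
  · rintro rfl; exact sch_good hg
  · intro h; exact good_unique w (sch_good hg) h

lemma sup_fromEdgeSet_edgeSet {T : SimpleGraph (Fin n)} {S : Finset (Sym2 (Fin n))}
    (hS : ∀ e ∈ S, ¬ e.IsDiag) :
    (T ⊔ fromEdgeSet ↑S).edgeSet = T.edgeSet ∪ ↑S := by
  rw [edgeSet_sup, edgeSet_fromEdgeSet]
  ext e
  simp only [Set.mem_union, Set.mem_diff, Set.mem_setOf_eq, Finset.mem_coe]
  constructor
  · rintro (h | ⟨h, -⟩)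
    · exact Or.inl h
    · exact Or.inr h
  · rintro (h | h)
    · exact Or.inl h
    · exact Or.inr ⟨h, hS e h⟩

lemma fiber_good {w : Sym2 (Fin n) → ℝ} {T : SimpleGraph (Fin n)} (hT : T.IsTree)
    {S : Finset (Sym2 (Fin n))} (hS : S ⊆ Dset w T) :
    good w (T ⊔ fromEdgeSet ↑S) T := by
  have hSd : ∀ e ∈ S, ¬ e.IsDiag := fun e he => (mem_filter.1 (hS he)).2.1
  refine ⟨hT, le_sup_left, ?_⟩
  intro e he heT
  rw [sup_fromEdgeSet_edgeSet hSd] at he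
  rcases he with he | he
  · exact absurd he heT
  · exact (mem_filter.1 (hS he)).2.2.2

lemma fiber_connected {T g : SimpleGraph (Fin n)} (hT : T.IsTree) (hle : T ≤ g) :
    g.Connected := by
  have hne : Nonempty (Fin n) := hT.isConnected.nonempty
  exact Connected.mk (fun u v => (hT.isConnected.preconnected u v).mono hle)

lemma penrose (w : Sym2 (Fin n) → ℝ) (ζ : Sym2 (Fin n) → ℂ) :
    ∑ g ∈ univ.filter (fun g : SimpleGraph (Fin n) => g.Connected),
        ∏ e ∈ g.edgeFinset, ζ e
      = ∑ T ∈ univ.filter (fun T : SimpleGraph (Fin n) => T.IsTree),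
          (∏ e ∈ T.edgeFinset, ζ e) * ∏ e ∈ Dset w T, (1 + ζ e) := by
  rw [← Finset.sum_fiberwise_of_maps_to (g := sch w)
    (t := univ.filter (fun T : SimpleGraph (Fin n) => T.IsTree))
    (fun g hg => mem_filter.2 ⟨mem_univ _, (sch_good (mem_filter.1 hg).2).1⟩)]
  refine Finset.sum_congr rfl ?_
  intro T hT
  rw [mem_filter] at hT
  have hTtree := hT.2
  have hgood : ∀ g ∈ (univ.filter (fun g : SimpleGraph (Fin n) => g.Connected)).filter
      (fun g => sch w g = T), good w g T := by
    intro g hg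
    rw [mem_filter, mem_filter] at hg
    exact (sch_eq_iff hg.1.2).1 hg.2
  have hfib : ∑ g ∈ (univ.filter (fun g : SimpleGraph (Fin n) => g.Connected)).filter
        (fun g => sch w g = T), ∏ e ∈ g.edgeFinset, ζ e
      = ∑ S ∈ (Dset w T).powerset, (∏ e ∈ T.edgeFinset, ζ e) * ∏ e ∈ S, ζ e := by
    refine Finset.sum_nbij' (i := fun g => g.edgeFinset \ T.edgeFinset)
      (j := fun S => T ⊔ fromEdgeSet ↑S) ?_ ?_ ?_ ?_ ?_
    · intro g hg
      have hgd := hgood g hg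
      rw [mem_powerset]
      intro e he
      rw [mem_sdiff, mem_edgeFinset, mem_edgeFinset] at he
      rw [Dset, mem_filter]
      exact ⟨mem_univ _, SimpleGraph.not_isDiag_of_mem_edgeSet _ he.1, he.2,
        hgd.2.2 e he.1 he.2⟩
    · intro S hS
      rw [mem_powerset] at hS
      rw [mem_filter, mem_filter]
      have hconn := fiber_connected hTtree (le_sup_left : T ≤ T ⊔ fromEdgeSet ↑S)
      exact ⟨⟨mem_univ _, hconn⟩, (sch_eq_iff hconn).2 (fiber_good hTtree hS)⟩
    · intro g hg
      have hgd := hgood g hg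
      apply edgeSet_injective
      have hnd : ∀ e ∈ g.edgeFinset \ T.edgeFinset, ¬ e.IsDiag := by
        intro e he
        rw [mem_sdiff, mem_edgeFinset] at he
        exact SimpleGraph.not_isDiag_of_mem_edgeSet _ he.1
      rw [sup_fromEdgeSet_edgeSet hnd, Finset.coe_sdiff, coe_edgeFinset, coe_edgeFinset]
      exact Set.union_diff_cancel (edgeSet_mono hgd.2.1)
    · intro S hS
      rw [mem_powerset] at hS
      have hSd : ∀ e ∈ S, ¬ e.IsDiag := fun e he => (mem_filter.1 (hS he)).2.1
      ext e
      simp only [mem_sdiff, SimpleGraph.edgeFinset, Set.mem_toFinset]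
      rw [sup_fromEdgeSet_edgeSet hSd]
      simp only [Set.mem_union, Finset.mem_coe]
      constructor
      · rintro ⟨h1 | h1, h2⟩
        · exact absurd h1 h2
        · exact h1
      · intro h
        exact ⟨Or.inr h, (mem_filter.1 (hS h)).2.2.1⟩
    · intro g hg
      have hgd := hgood g hg
      have hsub : T.edgeFinset ⊆ g.edgeFinset := edgeFinset_mono hgd.2.1
      rw [← Finset.prod_sdiff hsub, mul_comm]
  rw [hfib, ← Finset.mul_sum]
  congr 1
  have : ∀ e ∈ Dset w T, (1 + ζ e) = (ζ e + 1) := fun e _ => add_comm _ _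
  rw [Finset.prod_congr rfl this, Finset.prod_add]
  refine Finset.sum_congr rfl (fun S hS => ?_)
  simp
lemma sym2_sum_pairs (w : Sym2 (Fin n) → ℝ) (A : Finset (Sym2 (Fin n)))
    (hA : ∀ e ∈ A, ¬ e.IsDiag) :
    ∑ p ∈ (univ ×ˢ univ).filter
        (fun p : Fin n × Fin n => p.1 < p.2 ∧ s(p.1, p.2) ∈ A), w s(p.1, p.2)
      = ∑ e ∈ A, w e := by
  refine Finset.sum_nbij (i := fun p => s(p.1, p.2)) ?_ ?_ ?_ ?_
  · intro p hp
    exact (mem_filter.1 hp).2.2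
  · intro p hp q hq hpq
    rw [Finset.coe_filter, Set.mem_setOf_eq] at hp hq
    rw [Sym2.eq_iff] at hpq
    rcases hpq with ⟨h1, h2⟩ | ⟨h1, h2⟩
    · exact Prod.ext h1 h2
    · exfalso
      have := hp.2.1
      have := hq.2.1
      omega
  · intro e he
    rw [Finset.coe_filter] at *
    induction e using Sym2.ind with
    | _ x y =>
    have hxy : x ≠ y := fun hc => hA _ he (Sym2.mk_isDiag_iff.2 hc)
    rcases lt_or_gt_of_ne hxy with h | h
    · exact ⟨(x, y), Set.mem_setOf_eq ▸ ⟨mem_product.2 ⟨mem_univ _, mem_univ _⟩, h, he⟩, rfl⟩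
    · refine ⟨(y, x), Set.mem_setOf_eq ▸ ⟨mem_product.2 ⟨mem_univ _, mem_univ _⟩, h, ?_⟩, ?_⟩
      · rwa [Sym2.eq_swap]
      · rw [Sym2.eq_swap]
  · intro p hp
    rfl

lemma key_stability (u : Sym2 (Fin n) → ℂ) (b : Fin n → ℝ)
    (hstab : ∀ I : Finset (Fin n),
      -∑ i ∈ I, b i ≤
        ∑ p ∈ (I ×ˢ I).filter (fun p : Fin n × Fin n => p.1 < p.2), (u s(p.1, p.2)).re)
    {T : SimpleGraph (Fin n)} (hT : T.IsTree) :
    (∑ e ∈ T.edgeFinset, max 0 (-(u e).re)) - ∑ i, b i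
      ≤ ∑ e ∈ Dset (fun e => (u e).re) T, (u e).re := by
  set w : Sym2 (Fin n) → ℝ := fun e => (u e).re with hw
  set H : SimpleGraph (Fin n) := fromEdgeSet {e | e ∈ T.edgeSet ∧ w e < 0} with hH
  have hHedge : H.edgeSet = {e | e ∈ T.edgeSet ∧ w e < 0} := by
    rw [hH, edgeSet_fromEdgeSet]
    ext e
    simp only [Set.mem_diff, Set.mem_setOf_eq]
    exact ⟨fun h => h.1, fun h => ⟨h, SimpleGraph.not_isDiag_of_mem_edgeSet _ h.1⟩⟩
  have hHle : H ≤ T := by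
    intro a c hac
    rw [← SimpleGraph.mem_edgeSet] at hac ⊢
    exact (hHedge ▸ hac).1
  set comp : Fin n → H.ConnectedComponent := H.connectedComponentMk with hcomp
  set Q : Finset (Sym2 (Fin n)) := univ.filter
    (fun e => ¬ e.IsDiag ∧ ∀ i ∈ e, ∀ j ∈ e, comp i = comp j) with hQ
  -- Step 1 : stability implies  -∑ b ≤ ∑_{e ∈ Q} w e
  have hstabQ : -∑ i, b i ≤ ∑ e ∈ Q, w e := by
    haveI : Fintype H.ConnectedComponent := Fintype.ofFinite _
    have hb' : ∑ c : H.ConnectedComponent, ∑ i ∈ univ.filter (fun i => comp i = c), b i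
        = ∑ i, b i := Finset.sum_fiberwise _ _ _
    have hQ' : ∑ c : H.ConnectedComponent,
          ∑ e ∈ Q.filter (fun e => comp e.out.1 = c), w e
        = ∑ e ∈ Q, w e := Finset.sum_fiberwise _ _ _
    rw [← hb', ← hQ', ← Finset.sum_neg_distrib]
    refine Finset.sum_le_sum ?_
    intro c _
    have hpairs : ((univ.filter (fun i => comp i = c)) ×ˢ (univ.filter (fun i => comp i = c))).filter
          (fun p : Fin n × Fin n => p.1 < p.2)
        = (univ ×ˢ univ).filter (fun p : Fin n × Fin n =>
            p.1 < p.2 ∧ s(p.1, p.2) ∈ Q.filter (fun e => comp e.out.1 = c)) := by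
      ext p
      simp only [mem_filter, mem_product, mem_univ, true_and, hQ, Sym2.mk_isDiag_iff]
      constructor
      · rintro ⟨⟨h1, h2⟩, h3⟩
        refine ⟨h3, ⟨⟨fun hc => absurd (hc ▸ h3) (lt_irrefl _), ?_⟩, ?_⟩⟩
        · intro i hi j hj
          rw [Sym2.mem_iff] at hi hj
          rcases hi with rfl | rfl <;> rcases hj with rfl | rfl <;> simp [h1, h2]
        · have hm := Sym2.out_fst_mem s(p.1, p.2)
          rw [Sym2.mem_iff] at hm
          rcases hm with hm | hm <;> rw [hm] <;> assumption
      · rintro ⟨h3, ⟨-, hall⟩, hc⟩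
        have h1 : comp p.1 = c := by
          rw [← hc]
          exact hall _ (Sym2.mem_mk_left _ _) _ (Sym2.out_fst_mem _)
        have h2 : comp p.2 = c := by
          rw [← hc]
          exact hall _ (Sym2.mem_mk_right _ _) _ (Sym2.out_fst_mem _)
        exact ⟨⟨h1, h2⟩, h3⟩
    have := hstab (univ.filter (fun i => comp i = c))
    rw [hpairs] at this
    have hnd : ∀ e ∈ Q.filter (fun e => comp e.out.1 = c), ¬ e.IsDiag := by
      intro e he
      have h1 : e ∈ Q := (mem_filter.1 he).1
      rw [hQ, mem_filter] at h1
      exact h1.2.1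
    rw [sym2_sum_pairs w (Q.filter (fun e => comp e.out.1 = c)) hnd] at this
    exact this
  -- Step 2 : split Q
  have hsplit : ∑ e ∈ Q, w e
      = ∑ e ∈ Q.filter (fun e => e ∈ T.edgeSet), w e
        + ∑ e ∈ Q.filter (fun e => e ∉ T.edgeSet), w e := by
    rw [← Finset.sum_filter_add_sum_filter_not Q (fun e => e ∈ T.edgeSet)]
  -- Step 3 : Q ∩ T = negative edges of T
  have hC1 : Q.filter (fun e => e ∈ T.edgeSet) = T.edgeFinset.filter (fun e => w e < 0) := by
    ext e
    simp only [mem_filter, hQ, mem_univ, true_and, mem_edgeFinset]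
    constructor
    · rintro ⟨⟨hd, hall⟩, hTe⟩
      refine ⟨hTe, ?_⟩
      by_contra hge
      push_neg at hge
      -- e is a bridge of T but its endpoints are H-connected
      induction e using Sym2.ind with
      | _ x y =>
      have hxy : x ≠ y := fun hc => hd (Sym2.mk_isDiag_iff.2 hc)
      have hreach : H.Reachable x y := ConnectedComponent.exact
        (hall x (Sym2.mem_mk_left _ _) y (Sym2.mem_mk_right _ _))
      have hle2 : H ≤ T \ fromEdgeSet {s(x, y)} := by
        intro a c hac
        rw [sdiff_adj]
        refine ⟨hHle hac, fun hcon => ?_⟩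
        have h1 := ((fromEdgeSet_adj _).1 hcon).1
        rw [Set.mem_singleton_iff] at h1
        have h2 : w s(a, c) < 0 := ((hHedge ▸ (H.mem_edgeSet).2 hac)).2
        rw [h1] at h2
        exact absurd h2 (not_lt.2 hge)
      have hbridge := (isAcyclic_iff_forall_edge_isBridge.1 hT.IsAcyclic) hTe
      rw [isBridge_iff] at hbridge
      exact hbridge (hreach.mono hle2)
    · rintro ⟨hTe, hneg⟩
      have hd : ¬ e.IsDiag := SimpleGraph.not_isDiag_of_mem_edgeSet _ hTe
      refine ⟨⟨hd, ?_⟩, hTe⟩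
      induction e using Sym2.ind with
      | _ x y =>
      have hadj : H.Adj x y := (H.mem_edgeSet).1 (hHedge ▸ (Set.mem_setOf_eq ▸ ⟨hTe, hneg⟩))
      have hcxy : comp x = comp y := ConnectedComponent.sound hadj.reachable
      intro i hi j hj
      rw [Sym2.mem_iff] at hi hj
      rcases hi with rfl | rfl <;> rcases hj with rfl | rfl <;> simp [hcxy]
  -- Step 4 : value of the negative-edge sum
  have hsum1 : ∑ e ∈ T.edgeFinset.filter (fun e => w e < 0), w e
      = -∑ e ∈ T.edgeFinset, max 0 (-w e) := by
    rw [← Finset.sum_filter_add_sum_filter_not T.edgeFinset (fun e => w e < 0)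
      (fun e => max 0 (-w e))]
    have h1 : ∑ e ∈ T.edgeFinset.filter (fun e => w e < 0), max 0 (-w e)
        = ∑ e ∈ T.edgeFinset.filter (fun e => w e < 0), -w e := by
      refine Finset.sum_congr rfl (fun e he => ?_)
      have := (mem_filter.1 he).2
      rw [max_eq_right (by linarith)]
    have h2 : ∑ e ∈ T.edgeFinset.filter (fun e => ¬ w e < 0), max 0 (-w e) = 0 := by
      refine Finset.sum_eq_zero (fun e he => ?_)
      have := (mem_filter.1 he).2
      rw [max_eq_left (by push_neg at this; linarith)]
    rw [h1, h2, add_zero, Finset.sum_neg_distrib, neg_neg]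
  -- Step 5 : compare with Dset
  set D : Finset (Sym2 (Fin n)) := Dset w T with hD
  have hDQpos : ∀ e ∈ D.filter (fun e => e ∉ Q), 0 ≤ w e := by
    intro e he
    rw [mem_filter] at he
    obtain ⟨heD, heQ⟩ := he
    rw [hD, Dset, mem_filter] at heD
    obtain ⟨-, hd, heT, hcond⟩ := heD
    rw [hQ, mem_filter] at heQ
    push_neg at heQ
    obtain ⟨i, hi, j, hj, hij⟩ := heQ (mem_univ _) hd
    induction e using Sym2.ind with
    | _ x y =>
    have hxy : x ≠ y := fun hc => hd (Sym2.mk_isDiag_iff.2 hc)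
    have hcxy : comp x ≠ comp y := by
      rw [Sym2.mem_iff] at hi hj
      rcases hi with rfl | rfl <;> rcases hj with rfl | rfl
      · exact absurd rfl hij
      · exact hij
      · exact fun hc => hij hc.symm
      · exact absurd rfl hij
    obtain ⟨p0⟩ := hT.isConnected.preconnected x y
    set pp : T.Path x y := p0.toPath with hpp
    have hcondall := hcond rfl (↑pp) pp.isPath
    have hex : ∃ f ∈ (pp : T.Walk x y).edges, 0 ≤ w f := by
      by_contra hcon
      push_neg at hcon
      have hsub : ∀ f ∈ (pp : T.Walk x y).edges, f ∈ H.edgeSet := by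
        intro f hf
        rw [hHedge]
        exact ⟨(pp : T.Walk x y).edges_subset_edgeSet hf, hcon f hf⟩
      have := ((pp : T.Walk x y).transfer H hsub).reachable
      exact hcxy (ConnectedComponent.sound this)
    obtain ⟨f, hf, hf0⟩ := hex
    exact le_trans hf0 (w_le_of_ekey_lt (hcondall f hf))
  have hQnDneg : ∀ e ∈ (Q.filter (fun e => e ∉ T.edgeSet)).filter (fun e => e ∉ D),
      w e ≤ 0 := by
    intro e he
    rw [mem_filter, mem_filter] at he
    obtain ⟨⟨heQ, heT⟩, heD⟩ := he
    rw [hQ, mem_filter] at heQ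
    obtain ⟨-, hd, hall⟩ := heQ
    have hnecond : ¬ econd w T e := by
      intro hc
      exact heD (by rw [hD, Dset, mem_filter]; exact ⟨mem_univ _, hd, heT, hc⟩)
    rw [econd] at hnecond
    push_neg at hnecond
    obtain ⟨x, y, hexy, p, hp, f, hfp, hnlt⟩ := hnecond
    have hfT : f ∈ T.edgeSet := p.edges_subset_edgeSet hfp
    have hfe : f ≠ e := fun hc => heT (hc ▸ hfT)
    have helt : ekey w e < ekey w f :=
      lt_of_le_of_ne hnlt (fun hc => hfe (ekey_inj w hc).symm)
    have hwe : w e ≤ w f := w_le_of_ekey_lt helt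
    have hxmem : x ∈ e := hexy ▸ Sym2.mem_mk_left _ _
    have hymem : y ∈ e := hexy ▸ Sym2.mem_mk_right _ _
    have hcxy : comp x = comp y := hall x hxmem y hymem
    have hreach : H.Reachable x y := ConnectedComponent.exact hcxy
    obtain ⟨q0⟩ := hreach
    set qp : H.Path x y := q0.toPath with hqp
    have hsub : ∀ a ∈ (qp : H.Walk x y).edges, a ∈ T.edgeSet :=
      fun a ha => edgeSet_mono hHle ((qp : H.Walk x y).edges_subset_edgeSet ha)
    set q' : T.Walk x y := (qp : H.Walk x y).transfer T hsub with hq'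
    have hq'path : q'.IsPath := qp.isPath.transfer hsub
    have hpq : p = q' := by
      have := hT.IsAcyclic.path_unique ⟨p, hp⟩ ⟨q', hq'path⟩
      exact congrArg Subtype.val this
    have hfH : f ∈ H.edgeSet := by
      have : f ∈ q'.edges := hpq ▸ hfp
      rw [hq', SimpleGraph.Walk.edges_transfer] at this
      exact (qp : H.Walk x y).edges_subset_edgeSet this
    have hfneg : w f < 0 := (hHedge ▸ hfH).2
    linarith
  have hDsub : (Q.filter (fun e => e ∉ T.edgeSet)).filter (fun e => e ∈ D)
      = D.filter (fun e => e ∈ Q) := by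
    ext e
    simp only [mem_filter]
    constructor
    · rintro ⟨⟨h1, -⟩, h3⟩
      exact ⟨h3, h1⟩
    · rintro ⟨h1, h2⟩
      have h1' : e ∈ univ.filter
          (fun e => ¬ e.IsDiag ∧ e ∉ T.edgeSet ∧ econd w T e) := by rwa [hD, Dset] at h1
      have : e ∉ T.edgeSet := (mem_filter.1 h1').2.2.1
      exact ⟨⟨h2, this⟩, h1⟩
  have hstep5 : ∑ e ∈ Q.filter (fun e => e ∉ T.edgeSet), w e ≤ ∑ e ∈ D, w e := by
    have e1 : ∑ e ∈ Q.filter (fun e => e ∉ T.edgeSet), w e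
        = ∑ e ∈ (Q.filter (fun e => e ∉ T.edgeSet)).filter (fun e => e ∈ D), w e
          + ∑ e ∈ (Q.filter (fun e => e ∉ T.edgeSet)).filter (fun e => e ∉ D), w e := by
      rw [← Finset.sum_filter_add_sum_filter_not (Q.filter (fun e => e ∉ T.edgeSet))
        (fun e => e ∈ D)]
    have e2 : ∑ e ∈ D, w e
        = ∑ e ∈ D.filter (fun e => e ∈ Q), w e
          + ∑ e ∈ D.filter (fun e => e ∉ Q), w e := by
      rw [← Finset.sum_filter_add_sum_filter_not D (fun e => e ∈ Q)]
    have e3 : ∑ e ∈ (Q.filter (fun e => e ∉ T.edgeSet)).filter (fun e => e ∉ D), w e ≤ 0 :=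
      Finset.sum_nonpos hQnDneg
    have e4 : (0:ℝ) ≤ ∑ e ∈ D.filter (fun e => e ∉ Q), w e :=
      Finset.sum_nonneg hDQpos
    rw [e1, e2, hDsub]
    linarith
  -- final combination
  rw [hC1, hsum1] at hsplit
  linarith
lemma zeta_abs (z : ℂ) :
    ‖Complex.exp (-z) - 1‖
      = Real.exp (max 0 (-z.re))
        * ‖1 - Complex.exp (-(|z.re| : ℝ) + z.im * Complex.I)‖ := by
  rcases le_or_gt 0 z.re with h | h
  · rw [max_eq_left (neg_nonpos.2 h), Real.exp_zero, one_mul, abs_of_nonneg h]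
    have hconj : (-(z.re : ℂ)) + (z.im : ℂ) * Complex.I
        = (starRingEnd ℂ) (-z) := by
      apply Complex.ext <;> simp
    rw [hconj, Complex.exp_conj, ← map_one (starRingEnd ℂ), ← map_sub, Complex.norm_conj,
      map_one, norm_sub_rev]
  · rw [max_eq_right (le_of_lt (neg_pos.2 h)), abs_of_neg h, Complex.ofReal_neg, neg_neg, Complex.re_add_im]
    have hfac : Complex.exp (-z) - 1 = Complex.exp (-z) * (1 - Complex.exp z) := by
      rw [mul_sub, mul_one, ← Complex.exp_add, neg_add_cancel, Complex.exp_zero]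
    rw [hfac, norm_mul, Complex.norm_exp, Complex.neg_re]

/-- **Improved tree-graph bound**, complex case.  The stability condition is
imposed on the real parts, and on each tree edge the factor is the modulus of
`1 - exp(-|Re u| + i Im u)`. -/
theorem tree_graph_bound_complex (n : ℕ) (hn : 1 ≤ n)
    (u : Sym2 (Fin n) → ℂ) (b : Fin n → ℝ) (hb : ∀ i, 0 ≤ b i)
    (hstab : ∀ I : Finset (Fin n),
      -∑ i ∈ I, b i ≤
        ∑ p ∈ (I ×ˢ I).filter (fun p : Fin n × Fin n => p.1 < p.2), (u s(p.1, p.2)).re) :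
    ‖(∑ g ∈ Finset.univ.filter (fun g : SimpleGraph (Fin n) => g.Connected),
        ∏ e ∈ g.edgeFinset, (Complex.exp (-u e) - 1))‖
      ≤ Real.exp (∑ i, b i) *
        ∑ t ∈ Finset.univ.filter (fun t : SimpleGraph (Fin n) => t.IsTree),
          ∏ e ∈ t.edgeFinset,
            ‖1 - Complex.exp (-(|(u e).re| : ℝ) + (u e).im * Complex.I)‖ := by
  set w : Sym2 (Fin n) → ℝ := fun e => (u e).re with hwdef
  rw [penrose w (fun e => Complex.exp (-u e) - 1)]
  refine le_trans (norm_sum_le _ _) ?_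
  rw [Finset.mul_sum]
  refine Finset.sum_le_sum ?_
  intro T hT
  have hTtree : T.IsTree := (mem_filter.1 hT).2
  rw [norm_mul]
  have habs1 : ‖∏ e ∈ T.edgeFinset, (Complex.exp (-u e) - 1)‖
      = Real.exp (∑ e ∈ T.edgeFinset, max 0 (-w e))
        * ∏ e ∈ T.edgeFinset,
            ‖1 - Complex.exp (-(|(u e).re| : ℝ) + (u e).im * Complex.I)‖ := by
    rw [norm_prod]
    have : ∀ e ∈ T.edgeFinset, ‖Complex.exp (-u e) - 1‖
        = Real.exp (max 0 (-w e))
          * ‖1 - Complex.exp (-(|(u e).re| : ℝ) + (u e).im * Complex.I)‖ :=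
      fun e _ => zeta_abs (u e)
    rw [Finset.prod_congr rfl this, Finset.prod_mul_distrib, ← Real.exp_sum]
  have habs2 : ‖∏ e ∈ Dset w T, (1 + (Complex.exp (-u e) - 1))‖
      = Real.exp (-∑ e ∈ Dset w T, w e) := by
    rw [norm_prod]
    have : ∀ e ∈ Dset w T, ‖1 + (Complex.exp (-u e) - 1)‖
        = Real.exp (-w e) := by
      intro e _
      have h1 : (1 : ℂ) + (Complex.exp (-u e) - 1) = Complex.exp (-u e) := by ring
      rw [h1, Complex.norm_exp, Complex.neg_re]
    rw [Finset.prod_congr rfl this, ← Real.exp_sum, Finset.sum_neg_distrib]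
  rw [habs1, habs2]
  have hkey := key_stability u b hstab hTtree
  have hρ : (0:ℝ) ≤ ∏ e ∈ T.edgeFinset,
      ‖1 - Complex.exp (-(|(u e).re| : ℝ) + (u e).im * Complex.I)‖ :=
    Finset.prod_nonneg (fun e _ => norm_nonneg _)
  have hexp : Real.exp (∑ e ∈ T.edgeFinset, max 0 (-w e))
        * Real.exp (-∑ e ∈ Dset w T, w e) ≤ Real.exp (∑ i, b i) := by
    rw [← Real.exp_add]
    refine Real.exp_le_exp.2 ?_
    have : Dset w T = Dset (fun e => (u e).re) T := rfl
    rw [this]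
    linarith [hkey]
  calc Real.exp (∑ e ∈ T.edgeFinset, max 0 (-w e))
        * (∏ e ∈ T.edgeFinset,
            ‖1 - Complex.exp (-(|(u e).re| : ℝ) + (u e).im * Complex.I)‖)
        * Real.exp (-∑ e ∈ Dset w T, w e)
      = (Real.exp (∑ e ∈ T.edgeFinset, max 0 (-w e))
          * Real.exp (-∑ e ∈ Dset w T, w e))
        * ∏ e ∈ T.edgeFinset,
            ‖1 - Complex.exp (-(|(u e).re| : ℝ) + (u e).im * Complex.I)‖ := by
        ring
    _ ≤ Real.exp (∑ i, b i) * ∏ e ∈ T.edgeFinset,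
            ‖1 - Complex.exp (-(|(u e).re| : ℝ) + (u e).im * Complex.I)‖ :=
        mul_le_mul_of_nonneg_right hexp hρ
end

section
/- Let n ≥ 1 and let (T, E) be a partition scheme on the graphs on {1,…,n}. Then for any complex numbers u_{i,j} (1 ≤ i < j ≤ n), ∑_{g ∈ 𝒞_n} ∏_{ij ∈ g} (e^{−u_{i,j}} − 1) = ∑_{t ∈ 𝒯_n} ∏_{ij ∈ t} (e^{−u_{i,j}} − 1) · ∏_{ij ∈ E(t)} e^{−u_{i,j}}. -/
open scoped Classical

/-- **Hamlet's lemma** for a partition scheme `(T, E)`: the sum over connected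
graphs on `Fin n` equals a sum over spanning trees `t`, with the product over
the edges of `t` times the product of `e^{-u}` over the edges of `E t`.
A partition scheme is a map `T` from connected graphs to spanning trees
together with, for each spanning tree `t`, a set `E t` of edges of the
complete graph, disjoint from the edges of `t`, such that
`T⁻¹(t) = { g : t ⊆ g ⊆ t ∪ E t }`. -/
theorem partition_scheme_identity (n : ℕ) (hn : 1 ≤ n)
    (T : SimpleGraph (Fin n) → SimpleGraph (Fin n))
    (E : SimpleGraph (Fin n) → Finset (Sym2 (Fin n)))
    (hT : ∀ g : SimpleGraph (Fin n), g.Connected → (T g).IsTree)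
    (hEedge : ∀ t : SimpleGraph (Fin n), t.IsTree → ∀ e ∈ E t, ¬ e.IsDiag)
    (hEdisj : ∀ t : SimpleGraph (Fin n), t.IsTree → Disjoint (E t) t.edgeFinset)
    (hpart : ∀ t : SimpleGraph (Fin n), t.IsTree →
      ∀ g : SimpleGraph (Fin n), g.Connected →
        (T g = t ↔ t.edgeFinset ⊆ g.edgeFinset ∧ g.edgeFinset ⊆ t.edgeFinset ∪ E t))
    (u : Sym2 (Fin n) → ℂ) :
    ∑ g ∈ Finset.univ.filter (fun g : SimpleGraph (Fin n) => g.Connected),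
        ∏ e ∈ g.edgeFinset, (Complex.exp (-u e) - 1)
      = ∑ t ∈ Finset.univ.filter (fun t : SimpleGraph (Fin n) => t.IsTree),
          (∏ e ∈ t.edgeFinset, (Complex.exp (-u e) - 1)) *
            ∏ e ∈ E t, Complex.exp (-u e) := by
  classical
  have hmap : ∀ g ∈ Finset.univ.filter (fun g : SimpleGraph (Fin n) => g.Connected),
      T g ∈ Finset.univ.filter (fun t : SimpleGraph (Fin n) => t.IsTree) := by
    intro g hg
    simp only [Finset.mem_filter, Finset.mem_univ, true_and] at hg ⊢
    exact hT g hg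
  rw [← Finset.sum_fiberwise_of_maps_to hmap
    (fun g => ∏ e ∈ g.edgeFinset, (Complex.exp (-u e) - 1))]
  refine Finset.sum_congr rfl ?_
  intro t ht
  simp only [Finset.mem_filter, Finset.mem_univ, true_and] at ht
  have key : ∑ g ∈ (Finset.univ.filter (fun g : SimpleGraph (Fin n) => g.Connected)).filter
        (fun g => T g = t), ∏ e ∈ g.edgeFinset, (Complex.exp (-u e) - 1)
      = ∑ S ∈ (E t).powerset,
          (∏ e ∈ t.edgeFinset, (Complex.exp (-u e) - 1)) *
            ∏ e ∈ S, (Complex.exp (-u e) - 1) := by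
    refine Finset.sum_nbij' (i := fun g => g.edgeFinset \ t.edgeFinset)
      (j := fun S => t ⊔ SimpleGraph.fromEdgeSet (↑S)) ?_ ?_ ?_ ?_ ?_
    · intro g hg
      simp only [Finset.mem_filter, Finset.mem_univ, true_and] at hg
      obtain ⟨hgc, hgt⟩ := hg
      obtain ⟨h1, h2⟩ := (hpart t ht g hgc).1 hgt
      rw [Finset.mem_powerset]
      intro e he
      rw [Finset.mem_sdiff] at he
      rcases Finset.mem_union.1 (h2 he.1) with h | h
      · exact absurd h he.2
      · exact h
    · intro S hS
      rw [Finset.mem_powerset] at hS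
      have hle : t ≤ t ⊔ SimpleGraph.fromEdgeSet (↑S) := le_sup_left
      have hconn : (t ⊔ SimpleGraph.fromEdgeSet (↑S)).Connected :=
        ht.isConnected.mono hle
      simp only [Finset.mem_filter, Finset.mem_univ, true_and]
      refine ⟨hconn, ?_⟩
      rw [hpart t ht _ hconn]
      refine ⟨fun e he => ?_, fun e he => ?_⟩
      · simp only [SimpleGraph.mem_edgeFinset] at he ⊢
        exact SimpleGraph.edgeSet_mono hle he
      · simp only [SimpleGraph.mem_edgeFinset, SimpleGraph.edgeSet_sup,
          SimpleGraph.edgeSet_fromEdgeSet] at he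
        rw [Finset.mem_union]
        rcases he with h | ⟨h1, _⟩
        · exact Or.inl (SimpleGraph.mem_edgeFinset.2 h)
        · exact Or.inr (hS (Finset.mem_coe.1 h1))
    · intro g hg
      simp only [Finset.mem_filter, Finset.mem_univ, true_and] at hg
      obtain ⟨hgc, hgt⟩ := hg
      obtain ⟨h1, _⟩ := (hpart t ht g hgc).1 hgt
      rw [← SimpleGraph.edgeFinset_inj]
      apply Finset.coe_injective
      push_cast [SimpleGraph.coe_edgeFinset]
      rw [SimpleGraph.edgeSet_sup, SimpleGraph.edgeSet_fromEdgeSet]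
      have hdd : (g.edgeSet \ t.edgeSet) \ {e | e.IsDiag} = g.edgeSet \ t.edgeSet := by
        rw [sdiff_eq_left]
        exact Set.disjoint_left.2 fun e he hd => g.not_isDiag_of_mem_edgeSet he.1 hd
      have hsub : t.edgeSet ⊆ g.edgeSet := by
        intro e he
        exact SimpleGraph.mem_edgeFinset.1 (h1 (SimpleGraph.mem_edgeFinset.2 he))
      rw [show (Sym2.diagSet : Set (Sym2 (Fin n))) = {e | e.IsDiag} from rfl, hdd,
        Set.union_diff_cancel hsub]
    · intro S hS
      rw [Finset.mem_powerset] at hS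
      ext e
      simp only [Finset.mem_sdiff, SimpleGraph.mem_edgeFinset, SimpleGraph.edgeSet_sup,
        SimpleGraph.edgeSet_fromEdgeSet, Set.mem_union, Set.mem_diff, Finset.mem_coe,
        Set.mem_setOf_eq]
      constructor
      · rintro ⟨h | ⟨h1, _⟩, h2⟩
        · exact absurd h h2
        · exact h1
      · intro he
        exact ⟨Or.inr ⟨he, hEedge t ht e (hS he)⟩,
          fun hc => Finset.disjoint_left.1 (hEdisj t ht) (hS he)
            (SimpleGraph.mem_edgeFinset.2 hc)⟩
    · intro g hg
      simp only [Finset.mem_filter, Finset.mem_univ, true_and] at hg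
      obtain ⟨hgc, hgt⟩ := hg
      obtain ⟨h1, _⟩ := (hpart t ht g hgc).1 hgt
      rw [← Finset.prod_sdiff h1, mul_comm]
  rw [key, ← Finset.mul_sum]
  congr 1
  have := Finset.prod_add (fun e => Complex.exp (-u e) - 1) (fun _ => (1 : ℂ)) (E t)
  simp only [Finset.prod_const_one, mul_one, sub_add_cancel] at this
  rw [← this]
end

section
/- Let n ≥ 1 and let (T, E) be a partition scheme on the graphs on {1,…,n}. Then for any real numbers u_{i,j} (1 ≤ i < j ≤ n), |∑_{g ∈ 𝒞_n} ∏_{ij ∈ g} (e^{−u_{i,j}} − 1)| ≤ ∑_{t ∈ 𝒯_n} ∏_{ij ∈ t} |e^{−u_{i,j}} − 1| · ∏_{ij ∈ E(t)} e^{−u_{i,j}}. -/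
open scoped Classical

/-- Bound obtained from a partition scheme `(T, E)` (real case): the modulus of
the sum over connected graphs is bounded by the sum over spanning trees `t` of
`∏_{e ∈ t} |e^{-u_e} - 1| · ∏_{e ∈ E t} e^{-u_e}`. -/
theorem partition_scheme_bound (n : ℕ) (hn : 1 ≤ n)
    (T : SimpleGraph (Fin n) → SimpleGraph (Fin n))
    (E : SimpleGraph (Fin n) → Finset (Sym2 (Fin n)))
    (hT : ∀ g : SimpleGraph (Fin n), g.Connected → (T g).IsTree)
    (hEedge : ∀ t : SimpleGraph (Fin n), t.IsTree → ∀ e ∈ E t, ¬ e.IsDiag)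
    (hEdisj : ∀ t : SimpleGraph (Fin n), t.IsTree → Disjoint (E t) t.edgeFinset)
    (hpart : ∀ t : SimpleGraph (Fin n), t.IsTree →
      ∀ g : SimpleGraph (Fin n), g.Connected →
        (T g = t ↔ t.edgeFinset ⊆ g.edgeFinset ∧ g.edgeFinset ⊆ t.edgeFinset ∪ E t))
    (u : Sym2 (Fin n) → ℝ) :
    |∑ g ∈ Finset.univ.filter (fun g : SimpleGraph (Fin n) => g.Connected),
        ∏ e ∈ g.edgeFinset, (Real.exp (-u e) - 1)|
      ≤ ∑ t ∈ Finset.univ.filter (fun t : SimpleGraph (Fin n) => t.IsTree),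
          (∏ e ∈ t.edgeFinset, |Real.exp (-u e) - 1|) *
            ∏ e ∈ E t, Real.exp (-u e) := by
  have memEF : ∀ (G : SimpleGraph (Fin n)) (inst : Fintype G.edgeSet) (e : Sym2 (Fin n)),
      e ∈ @SimpleGraph.edgeFinset (Fin n) G inst ↔ e ∈ G.edgeSet := by
    intro G inst e
    exact Set.mem_toFinset
  set f : Sym2 (Fin n) → ℝ := fun e => Real.exp (-u e) with hf
  -- fiberwise decomposition
  have hmaps : ∀ g ∈ Finset.univ.filter (fun g : SimpleGraph (Fin n) => g.Connected),
      T g ∈ Finset.univ.filter (fun t : SimpleGraph (Fin n) => t.IsTree) := by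
    intro g hg
    simp only [Finset.mem_filter, Finset.mem_univ, true_and] at hg ⊢
    exact hT g hg
  rw [← Finset.sum_fiberwise_of_maps_to hmaps]
  refine (Finset.abs_sum_le_sum_abs _ _).trans ?_
  refine Finset.sum_le_sum ?_
  intro t ht
  simp only [Finset.mem_filter, Finset.mem_univ, true_and] at ht
  -- compute the fiber sum via subsets of `E t`
  have key : ∑ g ∈ (Finset.univ.filter
        (fun g : SimpleGraph (Fin n) => g.Connected)).filter (fun g => T g = t),
        ∏ e ∈ g.edgeFinset, (f e - 1)
      = ∑ S ∈ (E t).powerset, ∏ e ∈ t.edgeFinset ∪ S, (f e - 1) := by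
    refine Finset.sum_nbij' (fun g => g.edgeFinset \ t.edgeFinset)
      (fun S => SimpleGraph.fromEdgeSet (↑(t.edgeFinset ∪ S))) ?_ ?_ ?_ ?_ ?_
    · intro g hg
      simp only [Finset.mem_filter, Finset.mem_univ, true_and] at hg
      obtain ⟨hgc, hgt⟩ := hg
      obtain ⟨h1, h2⟩ := (hpart t ht g hgc).1 hgt
      rw [Finset.mem_powerset]
      intro e he
      rw [Finset.mem_sdiff] at he
      rcases Finset.mem_union.1 (h2 he.1) with h | h
      · exact absurd h he.2
      · exact h
    · intro S hS
      rw [Finset.mem_powerset] at hS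
      have hnondiag : ∀ e ∈ (↑(t.edgeFinset ∪ S) : Set (Sym2 (Fin n))), ¬ e.IsDiag := by
        intro e he
        rcases Finset.mem_union.1 (Finset.mem_coe.1 he) with h | h
        · exact SimpleGraph.not_isDiag_of_mem_edgeSet t (SimpleGraph.mem_edgeFinset.1 h)
        · exact hEedge t ht e (hS h)
      have hes : (SimpleGraph.fromEdgeSet (↑(t.edgeFinset ∪ S))).edgeSet
          = (↑(t.edgeFinset ∪ S) : Set (Sym2 (Fin n))) := by
        rw [SimpleGraph.edgeSet_fromEdgeSet]
        exact sdiff_eq_self_iff_disjoint.2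
          (Set.disjoint_left.2 fun e he he' => hnondiag e he' he)
      have htle : t ≤ SimpleGraph.fromEdgeSet (↑(t.edgeFinset ∪ S)) := by
        rw [← SimpleGraph.edgeSet_subset_edgeSet, hes, ← SimpleGraph.coe_edgeFinset]
        exact_mod_cast Finset.subset_union_left
      have hconn : (SimpleGraph.fromEdgeSet (↑(t.edgeFinset ∪ S))).Connected :=
        ht.isConnected.mono htle
      simp only [Finset.mem_filter, Finset.mem_univ, true_and]
      refine ⟨hconn, ?_⟩
      rw [hpart t ht _ hconn]
      constructor
      · intro e he
        refine (memEF _ _ e).2 ?_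
        rw [hes]
        exact Finset.mem_coe.2 (Finset.mem_union_left _ he)
      · intro e he
        have := (memEF _ _ e).1 he
        rw [hes] at this
        exact Finset.union_subset_union_right hS (Finset.mem_coe.1 this)
    · intro g hg
      simp only [Finset.mem_filter, Finset.mem_univ, true_and] at hg
      obtain ⟨hgc, hgt⟩ := hg
      obtain ⟨h1, _⟩ := (hpart t ht g hgc).1 hgt
      have : t.edgeFinset ∪ g.edgeFinset \ t.edgeFinset = g.edgeFinset :=
        Finset.union_sdiff_of_subset h1
      apply SimpleGraph.edgeSet_injective
      rw [SimpleGraph.edgeSet_fromEdgeSet, this, SimpleGraph.coe_edgeFinset]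
      exact sdiff_eq_self_iff_disjoint.2
        (Set.disjoint_left.2 fun e he he' =>
          SimpleGraph.not_isDiag_of_mem_edgeSet g he' he)
    · intro S hS
      rw [Finset.mem_powerset] at hS
      have hnondiag : ∀ e ∈ (↑(t.edgeFinset ∪ S) : Set (Sym2 (Fin n))), ¬ e.IsDiag := by
        intro e he
        rcases Finset.mem_union.1 (Finset.mem_coe.1 he) with h | h
        · exact SimpleGraph.not_isDiag_of_mem_edgeSet t (SimpleGraph.mem_edgeFinset.1 h)
        · exact hEedge t ht e (hS h)
      have hes : (SimpleGraph.fromEdgeSet (↑(t.edgeFinset ∪ S))).edgeSet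
          = (↑(t.edgeFinset ∪ S) : Set (Sym2 (Fin n))) := by
        rw [SimpleGraph.edgeSet_fromEdgeSet]
        exact sdiff_eq_self_iff_disjoint.2
          (Set.disjoint_left.2 fun e he he' => hnondiag e he' he)
      apply Finset.coe_injective
      rw [Finset.coe_sdiff, SimpleGraph.coe_edgeFinset, hes, Finset.coe_union,
        SimpleGraph.coe_edgeFinset, Set.union_diff_cancel_left]
      intro e he
      exact absurd he.1 (fun h => Finset.disjoint_left.1 (hEdisj t ht)
        (hS (Finset.mem_coe.1 he.2)) (SimpleGraph.mem_edgeFinset.2 h))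
    · intro g hg
      simp only [Finset.mem_filter, Finset.mem_univ, true_and] at hg
      obtain ⟨hgc, hgt⟩ := hg
      obtain ⟨h1, _⟩ := (hpart t ht g hgc).1 hgt
      rw [Finset.union_sdiff_of_subset h1]
  rw [key]
  -- evaluate the subset sum
  have hsum : ∑ S ∈ (E t).powerset, ∏ e ∈ t.edgeFinset ∪ S, (f e - 1)
      = (∏ e ∈ t.edgeFinset, (f e - 1)) * ∏ e ∈ E t, f e := by
    have hdisj : ∀ S ∈ (E t).powerset, Disjoint t.edgeFinset S := by
      intro S hS
      exact ((hEdisj t ht).mono_left (Finset.mem_powerset.1 hS)).symm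
    calc ∑ S ∈ (E t).powerset, ∏ e ∈ t.edgeFinset ∪ S, (f e - 1)
        = ∑ S ∈ (E t).powerset,
            (∏ e ∈ t.edgeFinset, (f e - 1)) * ∏ e ∈ S, (f e - 1) := by
          refine Finset.sum_congr rfl fun S hS => ?_
          rw [Finset.prod_union (hdisj S hS)]
      _ = (∏ e ∈ t.edgeFinset, (f e - 1)) *
            ∑ S ∈ (E t).powerset, ∏ e ∈ S, (f e - 1) := by
          rw [Finset.mul_sum]
      _ = (∏ e ∈ t.edgeFinset, (f e - 1)) * ∏ e ∈ E t, f e := by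
          congr 1
          have := Finset.prod_add (fun e => f e - 1) (fun _ => (1 : ℝ)) (E t)
          simp only [Finset.prod_const_one, mul_one, sub_add_cancel] at this
          rw [← this]
  rw [hsum, abs_mul, Finset.abs_prod]
  have : |∏ e ∈ E t, f e| = ∏ e ∈ E t, f e := by
    rw [abs_of_nonneg (Finset.prod_nonneg fun e _ => (Real.exp_pos _).le)]
  rw [this]
end

section
/- Let n ≥ 1 and fix a linear order on the edges of the complete graph K_n on vertex set {1,…,n}. For each spanning tree t ∈ 𝒯_n, let E(t) denote the set of edges e ∉ t such that e is greater (in the fixed order) than every edge on the unique path in t between the endpoints of e. Then there exists a map T : 𝒞_n → 𝒯_n such that for every t ∈ 𝒯_n, T^{−1}(t) = { g ∈ 𝒞_n : t ⊆ g ⊆ t ∪ E(t) }; in other words, (T, E) is a partition scheme. (T is given by Kruskal's algorithm: T(g) is the spanning tree of g obtained by scanning the edges of g in increasing order and keeping each edge that does not create a cycle with the previously kept edges.) -/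
open scoped Classical

/-- For a fixed linear order `lo` on the edges, `kruskalE lo t e` says that `e`
is an edge of the complete graph, not an edge of the spanning tree `t`, which
is greater (for `lo`) than every edge on the (unique) path in `t` between the
endpoints of `e`. -/
def kruskalE {n : ℕ} (lo : LinearOrder (Sym2 (Fin n))) (t : SimpleGraph (Fin n))
    (e : Sym2 (Fin n)) : Prop :=
  ¬ e.IsDiag ∧ e ∉ t.edgeSet ∧
    ∀ i j : Fin n, e = s(i, j) → ∀ p : t.Path i j, ∀ f ∈ p.1.edges, lo.lt f e

namespace SimpleGraph


noncomputable def kRank {n : ℕ} (lo : LinearOrder (Sym2 (Fin n))) (e : Sym2 (Fin n)) : ℕ :=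
  (Finset.univ.filter fun f => lo.lt f e).card

lemma kRank_lt {n : ℕ} (lo : LinearOrder (Sym2 (Fin n))) {e f : Sym2 (Fin n)}
    (h : lo.lt e f) : kRank lo e < kRank lo f := by
  letI := lo
  apply Finset.card_lt_card
  constructor
  · intro x hx
    simp only [Finset.mem_filter, Finset.mem_univ, true_and] at hx ⊢
    exact @lt_trans _ lo.toPreorder _ _ _ hx h
  · intro hsub
    have he : e ∈ Finset.univ.filter fun g => lo.lt g f := by
      simp only [Finset.mem_filter, Finset.mem_univ, true_and]
      exact h
    have := hsub he
    simp only [Finset.mem_filter, Finset.mem_univ, true_and] at this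
    exact @lt_irrefl _ lo.toPreorder e this

lemma good_key {n : ℕ} (lo : LinearOrder (Sym2 (Fin n)))
    {g t1 t2 : SimpleGraph (Fin n)} (ht1 : t1.IsTree) (ht2 : t2.IsTree)
    (h1g : t1 ≤ g)
    (hp2 : ∀ e ∈ g.edgeSet, e ∈ t2.edgeSet ∨ kruskalE lo t2 e)
    {e : Sym2 (Fin n)} (he1 : e ∈ t1.edgeSet) (he2 : e ∉ t2.edgeSet)
    (hmin : ∀ f, lo.lt f e → (f ∈ t1.edgeSet ↔ f ∈ t2.edgeSet)) : False := by
  have heg : e ∈ g.edgeSet := edgeSet_mono h1g he1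
  obtain ⟨i, j, rfl⟩ : ∃ i j, e = s(i, j) := by
    induction e using Sym2.ind with | _ x y => exact ⟨x, y, rfl⟩
  have hadj1 : t1.Adj i j := by rwa [mem_edgeSet] at he1
  rcases hp2 _ heg with h | ⟨_, _, hk⟩
  · exact he2 h
  obtain ⟨w⟩ := ht2.isConnected.preconnected i j
  set p : t2.Path i j := w.toPath with hp
  have hkp : ∀ f ∈ p.1.edges, lo.lt f s(i, j) := hk i j rfl p
  have hsub : ∀ f ∈ p.1.edges, f ∈ t1.edgeSet := by
    intro f hf
    exact (hmin f (hkp f hf)).mpr (p.1.edges_subset_edgeSet hf)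
  set q : t1.Walk i j := p.1.transfer t1 hsub with hq
  have hqpath : q.IsPath := p.2.transfer hsub
  obtain ⟨pu, _, hupath⟩ := ht1.existsUnique_path i j
  have h1 := hupath q hqpath
  have h2 := hupath (Path.singleton hadj1).1 (Path.singleton hadj1).2
  have hqs : q = (Path.singleton hadj1).1 := h1.trans h2.symm
  have hmemq : s(i, j) ∈ q.edges := by
    rw [hqs]
    simp [Path.singleton]
  rw [hq, p.1.edges_transfer hsub] at hmemq
  exact he2 (p.1.edges_subset_edgeSet hmemq)

lemma good_unique {n : ℕ} (lo : LinearOrder (Sym2 (Fin n)))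
    {g t1 t2 : SimpleGraph (Fin n)} (ht1 : t1.IsTree) (ht2 : t2.IsTree)
    (h1g : t1 ≤ g) (h2g : t2 ≤ g)
    (hp1 : ∀ e ∈ g.edgeSet, e ∈ t1.edgeSet ∨ kruskalE lo t1 e)
    (hp2 : ∀ e ∈ g.edgeSet, e ∈ t2.edgeSet ∨ kruskalE lo t2 e) : t1 = t2 := by
  by_contra hne
  have hsetne : t1.edgeSet ≠ t2.edgeSet := fun h => hne (edgeSet_inj.mp h)
  set D : Finset (Sym2 (Fin n)) :=
    Finset.univ.filter (fun e => ¬ (e ∈ t1.edgeSet ↔ e ∈ t2.edgeSet)) with hD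
  have hDne : D.Nonempty := by
    rw [Finset.filter_nonempty_iff]
    by_contra hc
    push_neg at hc
    apply hsetne
    ext e
    have := hc e (Finset.mem_univ e)
    tauto
  obtain ⟨e, heD, hemin⟩ := D.exists_min_image (kRank lo) hDne
  have hmin : ∀ f, lo.lt f e → (f ∈ t1.edgeSet ↔ f ∈ t2.edgeSet) := by
    intro f hf
    by_contra hc
    have hfD : f ∈ D := by
      rw [hD, Finset.mem_filter]
      exact ⟨Finset.mem_univ _, hc⟩
    exact absurd (hemin f hfD) (by exact Nat.not_le_of_lt (kRank_lt lo hf))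
  rw [hD, Finset.mem_filter] at heD
  rcases Classical.em (e ∈ t1.edgeSet) with h1 | h1
  · have h2 : e ∉ t2.edgeSet := fun h => heD.2 ⟨fun _ => h, fun _ => h1⟩
    exact good_key lo ht1 ht2 h1g hp2 h1 h2 hmin
  · have h2 : e ∈ t2.edgeSet := by tauto
    exact good_key lo ht2 ht1 h2g hp1 h2 h1 (fun f hf => (hmin f hf).symm)

lemma my_delete_edge_connected {V : Type*} {G : SimpleGraph V} {a b : V} (hG : G.Connected)
    (h : (G \ fromEdgeSet {s(a, b)}).Reachable a b) :
    (G \ fromEdgeSet {s(a, b)}).Connected := by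
  have key : ∀ x y : V, G.Adj x y → (G \ fromEdgeSet {s(a, b)}).Reachable x y := by
    intro x y hxy
    by_cases hc : s(x, y) = s(a, b)
    · rw [Sym2.eq_iff] at hc
      rcases hc with ⟨rfl, rfl⟩ | ⟨rfl, rfl⟩
      · exact h
      · exact h.symm
    · exact Adj.reachable (by simp [hxy, hc, sdiff_adj, fromEdgeSet_adj])
  haveI := hG.nonempty
  refine ⟨fun u v => ?_⟩
  obtain ⟨p⟩ := hG.preconnected u v
  induction p with
  | nil => exact Reachable.refl _
  | cons h' _ ih => exact (key _ _ h').trans ih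

lemma my_edgeSet_sdiff {V : Type*} (G : SimpleGraph V) (f : Sym2 V) :
    (G \ fromEdgeSet {f}).edgeSet = G.edgeSet \ {f} := by
  ext e
  simp only [edgeSet_sdiff, edgeSet_fromEdgeSet, Set.mem_diff,
    Set.mem_setOf_eq, Set.mem_singleton_iff]
  constructor
  · rintro ⟨he, hne⟩
    exact ⟨he, fun h => hne ⟨h, G.not_isDiag_of_mem_edgeSet he⟩⟩
  · rintro ⟨he, hne⟩
    exact ⟨he, fun h => hne h.1⟩

lemma my_edgeSet_sup {V : Type*} (G : SimpleGraph V) {e : Sym2 V} (he : ¬ e.IsDiag) :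
    (G ⊔ fromEdgeSet {e}).edgeSet = insert e G.edgeSet := by
  ext f
  simp only [edgeSet_sup, edgeSet_fromEdgeSet, Set.mem_union, Set.mem_diff,
    Set.mem_singleton_iff, Set.mem_setOf_eq, Set.mem_insert_iff]
  constructor
  · rintro (h | ⟨rfl, _⟩)
    · exact Or.inr h
    · exact Or.inl rfl
  · rintro (rfl | h)
    · exact Or.inr ⟨rfl, he⟩
    · exact Or.inl h

noncomputable def kW {n : ℕ} (lo : LinearOrder (Sym2 (Fin n))) (s : Set (Sym2 (Fin n))) : ℕ :=
  ∑ e : Sym2 (Fin n), s.indicator (fun f => kRank lo f + 1) e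

lemma kW_insert {n : ℕ} (lo : LinearOrder (Sym2 (Fin n))) {s : Set (Sym2 (Fin n))}
    {a : Sym2 (Fin n)} (ha : a ∉ s) :
    kW lo (insert a s) = kW lo s + (kRank lo a + 1) := by
  unfold kW
  set F : Sym2 (Fin n) → ℕ := fun f => kRank lo f + 1 with hF
  have key : ∀ e, (insert a s).indicator F e = s.indicator F e + ({a} : Set _).indicator F e := by
    intro e
    by_cases h1 : e = a
    · subst h1
      rw [Set.indicator_of_mem (Set.mem_insert _ _), Set.indicator_of_notMem ha,
        Set.indicator_of_mem (Set.mem_singleton _)]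
      exact (Nat.zero_add _).symm
    · rw [Set.indicator_of_notMem (by simp [h1] : e ∉ ({a} : Set _)), Nat.add_zero]
      by_cases h2 : e ∈ s
      · rw [Set.indicator_of_mem h2, Set.indicator_of_mem (Set.mem_insert_of_mem _ h2)]
      · rw [Set.indicator_of_notMem h2, Set.indicator_of_notMem (by simp [h1, h2])]
  simp only [key]
  rw [Finset.sum_add_distrib]
  congr 1
  rw [Finset.sum_eq_single a]
  · exact Set.indicator_of_mem (Set.mem_singleton _) F
  · intro b _ hb
    exact Set.indicator_of_notMem (by simp [hb]) F
  · simp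

lemma exists_good_tree {n : ℕ} (lo : LinearOrder (Sym2 (Fin n)))
    (g : SimpleGraph (Fin n)) (hg : g.Connected) :
    ∃ t : SimpleGraph (Fin n), t.IsTree ∧ t ≤ g ∧
      ∀ e ∈ g.edgeSet, e ∈ t.edgeSet ∨ kruskalE lo t e := by
  letI := lo
  set S : Finset (SimpleGraph (Fin n)) :=
    Finset.univ.filter (fun h => h ≤ g ∧ h.Connected) with hS
  have hgS : g ∈ S := by simp [hS, hg]
  obtain ⟨t, htS, htmin⟩ := S.exists_min_image (fun h => kW lo h.edgeSet) ⟨g, hgS⟩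
  have htg : t ≤ g := by
    have := Finset.mem_filter.mp htS
    exact this.2.1
  have htc : t.Connected := by
    have := Finset.mem_filter.mp htS
    exact this.2.2
  -- t is acyclic
  have hac : t.IsAcyclic := by
    intro v c hc
    have hne : c.edges ≠ [] := by
      intro h
      have h3 := hc.three_le_length
      have hl := c.length_edges
      rw [h] at hl
      simp at hl
      omega
    obtain ⟨e, he⟩ := List.exists_mem_of_ne_nil _ hne
    obtain ⟨a, b, rfl⟩ : ∃ a b, e = s(a, b) := by
      induction e using Sym2.ind with | _ x y => exact ⟨x, y, rfl⟩
    have hreach : (t \ fromEdgeSet {s(a, b)}).Reachable a b :=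
      (adj_and_reachable_delete_edges_iff_exists_cycle.mpr ⟨v, c, hc, he⟩).2
    have hconn' := my_delete_edge_connected htc hreach
    have hmem : s(a, b) ∈ t.edgeSet := c.edges_subset_edgeSet he
    have hS' : (t \ fromEdgeSet {s(a, b)}) ∈ S := by
      simp only [hS, Finset.mem_filter, Finset.mem_univ, true_and]
      exact ⟨le_trans sdiff_le htg, hconn'⟩
    have hins : t.edgeSet = insert s(a, b) (t.edgeSet \ {s(a, b)}) := by
      rw [Set.insert_diff_singleton, Set.insert_eq_self.mpr hmem]
    have hlt : kW lo (t \ fromEdgeSet {s(a, b)}).edgeSet < kW lo t.edgeSet := by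
      rw [my_edgeSet_sdiff]
      conv_rhs => rw [hins]
      rw [kW_insert lo (by simp)]
      omega
    exact absurd (htmin _ hS') (by omega)
  refine ⟨t, ⟨htc, hac⟩, htg, ?_⟩
  -- the kruskal property
  intro e heg
  by_cases het : e ∈ t.edgeSet
  · exact Or.inl het
  refine Or.inr ⟨g.not_isDiag_of_mem_edgeSet heg, het, ?_⟩
  rintro i j rfl p f hf
  by_contra hfe
  have hft : f ∈ t.edgeSet := p.1.edges_subset_edgeSet hf
  have hef : lo.lt s(i, j) f :=
    @lt_of_le_of_ne _ lo.toPartialOrder _ _ (@le_of_not_gt _ lo _ _ hfe) (fun h => het (h ▸ hft))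
  have hediag : ¬ (s(i, j) : Sym2 (Fin n)).IsDiag := g.not_isDiag_of_mem_edgeSet heg
  set G2 : SimpleGraph (Fin n) := t ⊔ fromEdgeSet {s(i, j)} with hG2
  have hle2 : t ≤ G2 := le_sup_left
  have hG2g : G2 ≤ g := by
    refine sup_le htg ?_
    intro x y hxy
    rw [fromEdgeSet_adj] at hxy
    obtain ⟨hxy1, _⟩ := hxy
    rw [Set.mem_singleton_iff] at hxy1
    have h2 := heg
    rw [← hxy1, mem_edgeSet] at h2
    exact h2
  have hG2c : G2.Connected := htc.mono hle2
  have hsub : ∀ e' ∈ p.1.edges, e' ∈ G2.edgeSet :=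
    fun e' he' => (edgeSet_mono hle2) (p.1.edges_subset_edgeSet he')
  set p2 : G2.Walk i j := p.1.transfer G2 hsub with hp2
  have hp2path : p2.IsPath := p.2.transfer hsub
  have hp2edges : p2.edges = p.1.edges := p.1.edges_transfer hsub
  have hadj : G2.Adj j i := by
    refine Adj.symm (Or.inr ?_)
    rw [fromEdgeSet_adj]
    refine ⟨rfl, ?_⟩
    intro h
    exact hediag (by simp [h])
  have hecyc : s(j, i) ∉ p2.edges := by
    rw [hp2edges, Sym2.eq_swap]
    intro h
    exact het (p.1.edges_subset_edgeSet h)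
  have hcyc : (Walk.cons hadj (⟨p2, hp2path⟩ : G2.Path i j).1).IsCycle :=
    Path.cons_isCycle ⟨p2, hp2path⟩ hadj hecyc
  have hfc : f ∈ (Walk.cons hadj p2).edges := by
    rw [Walk.edges_cons]
    exact List.mem_cons_of_mem _ (hp2edges ▸ hf)
  obtain ⟨a, b, rfl⟩ : ∃ a b, f = s(a, b) := by
    induction f using Sym2.ind with | _ x y => exact ⟨x, y, rfl⟩
  have hreach : (G2 \ fromEdgeSet {s(a, b)}).Reachable a b :=
    (adj_and_reachable_delete_edges_iff_exists_cycle.mpr ⟨j, _, hcyc, hfc⟩).2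
  have hconn3 := my_delete_edge_connected hG2c hreach
  set G3 := G2 \ fromEdgeSet {s(a, b)} with hG3
  have hS3 : G3 ∈ S := by
    simp only [hS, Finset.mem_filter, Finset.mem_univ, true_and]
    exact ⟨le_trans sdiff_le hG2g, hconn3⟩
  have hne_ef : (s(i, j) : Sym2 (Fin n)) ≠ s(a, b) := fun h => het (h ▸ hft)
  have hG3edge : G3.edgeSet = insert s(i, j) (t.edgeSet \ {s(a, b)}) := by
    rw [hG3, my_edgeSet_sdiff, hG2, my_edgeSet_sup _ hediag,
      ← Set.insert_diff_singleton_comm hne_ef]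
  have hins : t.edgeSet = insert s(a, b) (t.edgeSet \ {s(a, b)}) := by
    rw [Set.insert_diff_singleton, Set.insert_eq_self.mpr hft]
  have hlt3 : kW lo G3.edgeSet < kW lo t.edgeSet := by
    rw [hG3edge, kW_insert lo (by simp [het] : s(i, j) ∉ t.edgeSet \ {s(a, b)})]
    conv_rhs => rw [hins]
    rw [kW_insert lo (by simp)]
    have := kRank_lt lo hef
    omega
  exact absurd (htmin _ hS3) (by omega)

end SimpleGraph

/-- **Kruskal's algorithm yields a partition scheme**: there is a map `T` from
connected graphs on `Fin n` to spanning trees such that, for every spanning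
tree `t`, the fiber `T⁻¹(t)` consists exactly of the connected graphs `g` with
`t ⊆ g ⊆ t ∪ E(t)`, where `E(t)` is the set of edges described by
`kruskalE lo t`. -/
theorem kruskal_partition_scheme (n : ℕ) (hn : 1 ≤ n)
    (lo : LinearOrder (Sym2 (Fin n))) :
    ∃ T : SimpleGraph (Fin n) → SimpleGraph (Fin n),
      (∀ g : SimpleGraph (Fin n), g.Connected → (T g).IsTree) ∧
      ∀ t : SimpleGraph (Fin n), t.IsTree →
        ∀ g : SimpleGraph (Fin n), g.Connected →
          (T g = t ↔ t ≤ g ∧ ∀ e ∈ g.edgeSet, e ∈ t.edgeSet ∨ kruskalE lo t e) := by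
  classical
  refine ⟨fun g => if h : ∃ t : SimpleGraph (Fin n), t.IsTree ∧ t ≤ g ∧
      ∀ e ∈ g.edgeSet, e ∈ t.edgeSet ∨ kruskalE lo t e then h.choose else ⊥, ?_, ?_⟩
  · intro g hg
    have hex := SimpleGraph.exists_good_tree lo g hg
    simp only [dif_pos hex]
    exact hex.choose_spec.1
  · intro t ht g hg
    have hex := SimpleGraph.exists_good_tree lo g hg
    simp only [dif_pos hex]
    constructor
    · rintro rfl
      exact ⟨hex.choose_spec.2.1, hex.choose_spec.2.2⟩
    · rintro ⟨h1, h2⟩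
      exact SimpleGraph.good_unique lo hex.choose_spec.1 ht hex.choose_spec.2.1 h1
        hex.choose_spec.2.2 h2
end

section
/- Let n ≥ 1, let u_{i,j} ∈ ℝ (1 ≤ i < j ≤ n), and fix a linear order on the edges of K_n along which u is nondecreasing (i.e., if edge e precedes edge f then u_e ≤ u_f). Let t ∈ 𝒯_n be a spanning tree, let E(t) be the set of edges e ∉ t such that e is greater than every edge on the unique path in t between the endpoints of e, and let t_- be the forest consisting of those edges of t with u_{i,j} < 0. Then ∑_{ij ∈ t_-} u_{i,j} + ∑_{ij ∈ E(t)} u_{i,j} ≥ ∑_{{i,j}} u_{i,j}, where the last sum ranges over all pairs i < j such that i and j lie in the same connected component of the forest t_-. -/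
open scoped Classical

/-- The spanning forest `t_-` : the subgraph of `t` consisting of the edges of
negative weight. -/
def negForest {n : ℕ} (t : SimpleGraph (Fin n)) (u : Sym2 (Fin n) → ℝ) :
    SimpleGraph (Fin n) where
  Adj i j := t.Adj i j ∧ u s(i, j) < 0
  symm := ⟨fun i j h => ⟨h.1.symm, by rw [Sym2.eq_swap]; exact h.2⟩⟩
  loopless := ⟨fun i h => t.loopless.irrefl i h.1⟩

lemma negForest_le {n : ℕ} (t : SimpleGraph (Fin n)) (u : Sym2 (Fin n) → ℝ) :
    negForest t u ≤ t := fun _ _ h => h.1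

lemma mem_negForest_edgeSet {n : ℕ} {t : SimpleGraph (Fin n)} {u : Sym2 (Fin n) → ℝ}
    {f : Sym2 (Fin n)} (hf : f ∈ (negForest t u).edgeSet) : u f < 0 := by
  induction f using Sym2.ind with
  | _ a b =>
    rw [SimpleGraph.mem_edgeSet] at hf
    exact hf.2

lemma nonneg_of_not_negForest {n : ℕ} {t : SimpleGraph (Fin n)} {u : Sym2 (Fin n) → ℝ}
    {f : Sym2 (Fin n)} (h1 : f ∈ t.edgeSet) (h2 : f ∉ (negForest t u).edgeSet) : 0 ≤ u f := by
  induction f using Sym2.ind with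
  | _ a b =>
    rw [SimpleGraph.mem_edgeSet] at h1 h2
    by_contra h
    exact h2 ⟨h1, lt_of_not_ge h⟩

/-- Every path in the tree `t` between two vertices reachable in the negative
forest consists of negative-forest edges. -/
lemma path_edges_neg {n : ℕ} {t : SimpleGraph (Fin n)} {u : Sym2 (Fin n) → ℝ} (ht : t.IsTree)
    {i j : Fin n} (hr : (negForest t u).Reachable i j)
    {p : t.Walk i j} (hp : p.IsPath) : ∀ f ∈ p.edges, f ∈ (negForest t u).edgeSet := by
  obtain ⟨w⟩ := hr
  set q := w.toPath with hqdef
  have hq : ∀ f ∈ (q : (negForest t u).Walk i j).edges, f ∈ t.edgeSet :=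
    fun f hf => (SimpleGraph.edgeSet_mono (negForest_le t u))
      ((q : (negForest t u).Walk i j).edges_subset_edgeSet hf)
  have hq' : ((q : (negForest t u).Walk i j).transfer t hq).IsPath := q.prop.transfer hq
  have huniq := ht.existsUnique_path i j
  have hpq : p = (q : (negForest t u).Walk i j).transfer t hq := huniq.unique hp hq'
  intro f hf
  rw [hpq, SimpleGraph.Walk.edges_transfer] at hf
  exact (q : (negForest t u).Walk i j).edges_subset_edgeSet hf

lemma claim3 {n : ℕ} {t : SimpleGraph (Fin n)} {u : Sym2 (Fin n) → ℝ} (ht : t.IsTree)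
    (lo : LinearOrder (Sym2 (Fin n))) (hmono : ∀ e f, lo.le e f → u e ≤ u f)
    {e : Sym2 (Fin n)} (hd : ¬ e.IsDiag)
    (hr : e ∈ Sym2.fromRel (⟨fun x y (h : (negForest t u).Reachable x y) => h.symm⟩ : Std.Symm (negForest t u).Reachable))
    (hA : e ∉ (negForest t u).edgeSet) (hB : ¬ kruskalE lo t e) : u e ≤ 0 := by
  letI := lo
  by_cases het : e ∈ t.edgeSet
  · exfalso
    apply hA
    induction e using Sym2.ind with
    | _ i j =>
      rw [SimpleGraph.mem_edgeSet] at het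
      have hreach : (negForest t u).Reachable i j := Sym2.fromRel_prop.1 hr
      have hsing := path_edges_neg ht hreach (SimpleGraph.Path.singleton het).2
      exact hsing s(i, j) (by simp [SimpleGraph.Path.singleton])
  · have hnotall : ¬ (∀ i j : Fin n, e = s(i, j) → ∀ p : t.Path i j,
        ∀ f ∈ p.1.edges, lo.lt f e) := fun hall => hB ⟨hd, het, hall⟩
    push_neg at hnotall
    obtain ⟨i, j, hij, p, f, hf, hlt⟩ := hnotall
    have hreach : (negForest t u).Reachable i j := by
      induction e using Sym2.ind with
      | _ a b =>
        have hrab : (negForest t u).Reachable a b := Sym2.fromRel_prop.1 hr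
        rw [Sym2.eq_iff] at hij
        rcases hij with ⟨h1, h2⟩ | ⟨h1, h2⟩
        · exact h1 ▸ h2 ▸ hrab
        · exact h1 ▸ h2 ▸ hrab.symm
    have hfneg : u f < 0 :=
      mem_negForest_edgeSet (path_edges_neg ht hreach p.2 f hf)
    have hle : lo.le e f := hlt
    exact le_of_lt (lt_of_le_of_lt (hmono e f hle) hfneg)

lemma claim4 {n : ℕ} {t : SimpleGraph (Fin n)} {u : Sym2 (Fin n) → ℝ} (ht : t.IsTree)
    (lo : LinearOrder (Sym2 (Fin n))) (hmono : ∀ e f, lo.le e f → u e ≤ u f)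
    {e : Sym2 (Fin n)} (hB : kruskalE lo t e)
    (hnr : e ∉ Sym2.fromRel (⟨fun x y (h : (negForest t u).Reachable x y) => h.symm⟩ : Std.Symm (negForest t u).Reachable)) :
    0 ≤ u e := by
  obtain ⟨hd, hnt, hall⟩ := hB
  induction e using Sym2.ind with
  | _ i j =>
    have hreach : t.Reachable i j := ht.isConnected.preconnected i j
    obtain ⟨w⟩ := hreach
    set p := w.toPath with hpdef
    have hex : ∃ f ∈ (p : t.Walk i j).edges, f ∉ (negForest t u).edgeSet := by
      by_contra hcon
      push_neg at hcon
      apply hnr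
      rw [Sym2.fromRel_prop]
      exact ⟨(p : t.Walk i j).transfer (negForest t u) hcon⟩
    obtain ⟨f, hf, hfn⟩ := hex
    have hf0 : 0 ≤ u f :=
      nonneg_of_not_negForest ((p : t.Walk i j).edges_subset_edgeSet hf) hfn
    have hlt : lo.lt f s(i, j) := hall i j rfl p f hf
    exact le_trans hf0 (hmono f s(i, j) (@le_of_lt _ lo.toPreorder _ _ hlt))

/-- **Key inequality** (Procacci–Yuhjtman): for a spanning tree `t` and an
edge order along which `u` is nondecreasing,
`∑_{e ∈ t_-} u_e + ∑_{e ∈ E(t)} u_e ≥ ∑ u_{i,j}`, where the last sum is over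
pairs `i < j` lying in the same connected component of the forest `t_-`. -/
theorem kruskal_key_inequality (n : ℕ) (hn : 1 ≤ n)
    (u : Sym2 (Fin n) → ℝ)
    (lo : LinearOrder (Sym2 (Fin n))) (hmono : ∀ e f, lo.le e f → u e ≤ u f)
    (t : SimpleGraph (Fin n)) (ht : t.IsTree) :
    ∑ p ∈ Finset.univ.filter
        (fun p : Fin n × Fin n => p.1 < p.2 ∧ (negForest t u).Reachable p.1 p.2),
        u s(p.1, p.2)
      ≤ (∑ e ∈ (negForest t u).edgeFinset, u e)
        + ∑ e ∈ Finset.univ.filter (kruskalE lo t), u e := by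
  classical
  set A := (negForest t u).edgeFinset with hAdef
  set B := Finset.univ.filter (kruskalE lo t) with hBdef
  set S := Finset.univ.filter (fun e : Sym2 (Fin n) =>
    ¬ e.IsDiag ∧ e ∈ Sym2.fromRel (⟨fun x y (h : (negForest t u).Reachable x y) => h.symm⟩ : Std.Symm (negForest t u).Reachable))
    with hSdef
  have hstep1 : ∑ p ∈ Finset.univ.filter
      (fun p : Fin n × Fin n => p.1 < p.2 ∧ (negForest t u).Reachable p.1 p.2),
      u s(p.1, p.2) = ∑ e ∈ S, u e := by
    refine Finset.sum_bij (fun p _ => s(p.1, p.2)) ?_ ?_ ?_ ?_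
    · intro a ha
      rw [Finset.mem_filter] at ha ⊢
      refine ⟨Finset.mem_univ _, ?_, Sym2.fromRel_prop.2 ha.2.2⟩
      simpa [Sym2.mk_isDiag_iff] using ha.2.1.ne
    · intro a ha b hb hab
      rw [Finset.mem_filter] at ha hb
      rw [Sym2.eq_iff] at hab
      rcases hab with ⟨h1, h2⟩ | ⟨h1, h2⟩
      · exact Prod.ext h1 h2
      · exact absurd (h1 ▸ h2 ▸ ha.2.1) (asymm hb.2.1)
    · intro e he
      rw [Finset.mem_filter] at he
      induction e using Sym2.ind with
      | _ a b =>
        have hab : a ≠ b := by simpa [Sym2.mk_isDiag_iff] using he.2.1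
        have hr : (negForest t u).Reachable a b := Sym2.fromRel_prop.1 he.2.2
        rcases hab.lt_or_gt with h | h
        · exact ⟨(a, b), Finset.mem_filter.2 ⟨Finset.mem_univ _, h, hr⟩, rfl⟩
        · exact ⟨(b, a), Finset.mem_filter.2 ⟨Finset.mem_univ _, h, hr.symm⟩, Sym2.eq_swap⟩
    · intro a _; rfl
  have hAS : A ⊆ S := by
    intro e he
    rw [hAdef, SimpleGraph.mem_edgeFinset] at he
    rw [hSdef, Finset.mem_filter]
    refine ⟨Finset.mem_univ _, SimpleGraph.not_isDiag_of_mem_edgeSet _ he, ?_⟩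
    induction e using Sym2.ind with
    | _ a b =>
      rw [SimpleGraph.mem_edgeSet] at he
      exact Sym2.fromRel_prop.2 he.reachable
  have hAB : Disjoint A B := by
    rw [Finset.disjoint_left]
    intro e heA heB
    rw [hAdef, SimpleGraph.mem_edgeFinset] at heA
    rw [hBdef, Finset.mem_filter] at heB
    exact heB.2.2.1 (SimpleGraph.edgeSet_mono (negForest_le t u) heA)
  rw [hstep1, ← Finset.sum_inter_add_sum_sdiff S (A ∪ B) u]
  have hsplit : S ∩ (A ∪ B) = A ∪ S ∩ B := by
    rw [Finset.inter_union_distrib_left, Finset.inter_eq_right.2 hAS]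
  have hdisj2 : Disjoint A (S ∩ B) :=
    hAB.mono_right Finset.inter_subset_right
  rw [hsplit, Finset.sum_union hdisj2]
  have h1 : ∑ e ∈ S ∩ B, u e ≤ ∑ e ∈ B, u e := by
    apply Finset.sum_le_sum_of_subset_of_nonneg Finset.inter_subset_right
    intro e heB heSB
    have heS : e ∉ S := fun hS => heSB (Finset.mem_inter.2 ⟨hS, heB⟩)
    rw [hBdef, Finset.mem_filter] at heB
    have hd := heB.2.1
    refine claim4 ht lo hmono heB.2 ?_
    intro hfr
    exact heS (Finset.mem_filter.2 ⟨Finset.mem_univ _, hd, hfr⟩)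
  have h2 : ∑ e ∈ S \ (A ∪ B), u e ≤ 0 := by
    apply Finset.sum_nonpos
    intro e he
    rw [Finset.mem_sdiff, Finset.mem_union] at he
    rw [hSdef, Finset.mem_filter] at he
    push_neg at he
    refine claim3 ht lo hmono he.1.2.1 he.1.2.2 ?_ ?_
    · intro hes
      exact he.2.1 (by rw [hAdef, SimpleGraph.mem_edgeFinset]; exact hes)
    · intro hk
      exact he.2.2 (Finset.mem_filter.2 ⟨Finset.mem_univ _, hk⟩)
  linarith
end

section
/- Let n ≥ 1 and let u_{i,j} ∈ ℝ and b_i ∈ [0,∞) satisfy the stability condition: for every subset I ⊆ {1,…,n}, ∑_{i,j ∈ I, i<j} u_{i,j} ≥ −∑_{i ∈ I} b_i. Fix a linear order on the edges of K_n along which u is nondecreasing, let t ∈ 𝒯_n be a spanning tree, and let E(t) be the set of edges e ∉ t such that e is greater than every edge on the unique path in t between the endpoints of e. Then ∏_{ij ∈ t} |e^{−u_{i,j}} − 1| · ∏_{ij ∈ E(t)} e^{−u_{i,j}} ≤ e^{∑_{i=1}^n b_i} · ∏_{ij ∈ t} (1 − e^{−|u_{i,j}|}). -/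
open scoped Classical

private lemma reach_of_adj_reach {V : Type*} {G G' : SimpleGraph V}
    (h : ∀ a b, G.Adj a b → G'.Reachable a b) {x y : V}
    (hr : G.Reachable x y) : G'.Reachable x y := by
  obtain ⟨w⟩ := hr
  induction w with
  | nil => exact SimpleGraph.Reachable.refl _
  | cons ha _ ih => exact (h _ _ ha).trans ih

private lemma abs_exp_sub_one_eq (x : ℝ) :
    |Real.exp (-x) - 1| = Real.exp (max (-x) 0) * (1 - Real.exp (-|x|)) := by
  rcases le_total 0 x with h | h
  · have h2 : Real.exp (-x) ≤ 1 := Real.exp_le_one_iff.mpr (by linarith)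
    rw [abs_of_nonpos (by linarith), abs_of_nonneg h,
      max_eq_right (by linarith : -x ≤ 0), Real.exp_zero, one_mul]
    ring
  · have h2 : (1 : ℝ) ≤ Real.exp (-x) := Real.one_le_exp_iff.mpr (by linarith)
    rw [abs_of_nonneg (by linarith), abs_of_nonpos h,
      max_eq_left (by linarith : 0 ≤ -x), neg_neg, mul_sub, mul_one, ← Real.exp_add]
    simp

/-- Under the stability condition, for a spanning tree `t` and an edge order
along which `u` is nondecreasing,
`∏_{e ∈ t} |e^{-u_e} - 1| · ∏_{e ∈ E(t)} e^{-u_e}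
  ≤ e^{∑ b_i} · ∏_{e ∈ t} (1 - e^{-|u_e|})`. -/
theorem tree_term_bound (n : ℕ) (hn : 1 ≤ n)
    (u : Sym2 (Fin n) → ℝ) (b : Fin n → ℝ) (hb : ∀ i, 0 ≤ b i)
    (hstab : ∀ I : Finset (Fin n),
      -∑ i ∈ I, b i ≤
        ∑ p ∈ (I ×ˢ I).filter (fun p : Fin n × Fin n => p.1 < p.2), u s(p.1, p.2))
    (lo : LinearOrder (Sym2 (Fin n))) (hmono : ∀ e f, lo.le e f → u e ≤ u f)
    (t : SimpleGraph (Fin n)) (ht : t.IsTree) :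
    (∏ e ∈ t.edgeFinset, |Real.exp (-u e) - 1|) *
        ∏ e ∈ Finset.univ.filter (kruskalE lo t), Real.exp (-u e)
      ≤ Real.exp (∑ i, b i) * ∏ e ∈ t.edgeFinset, (1 - Real.exp (-|u e|)) := by
  classical
  letI := lo
  set B := ∑ i, b i with hB
  set Efin := Finset.univ.filter (kruskalE lo t) with hEfin
  have hC : (0:ℝ) ≤ ∏ e ∈ t.edgeFinset, (1 - Real.exp (-|u e|)) := by
    refine Finset.prod_nonneg fun e _ => ?_
    have : Real.exp (-|u e|) ≤ 1 := Real.exp_le_one_iff.mpr (neg_nonpos.mpr (abs_nonneg _))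
    linarith
  have hprod1 : (∏ e ∈ t.edgeFinset, |Real.exp (-u e) - 1|)
      = Real.exp (∑ e ∈ t.edgeFinset, max (-u e) 0) *
          ∏ e ∈ t.edgeFinset, (1 - Real.exp (-|u e|)) := by
    rw [Real.exp_sum, ← Finset.prod_mul_distrib]
    exact Finset.prod_congr rfl fun e _ => abs_exp_sub_one_eq (u e)
  have hprod2 : (∏ e ∈ Efin, Real.exp (-u e)) = Real.exp (∑ e ∈ Efin, -u e) :=
    (Real.exp_sum _ _).symm
  have hkey : ∑ e ∈ t.edgeFinset, max (-u e) 0 + ∑ e ∈ Efin, -u e ≤ B := by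
    have hmax : ∀ x : ℝ, max (-x) 0 = -(min x 0) := by
      intro x; rcases le_total x 0 with h | h
      · rw [max_eq_left (by linarith), min_eq_left h]
      · rw [max_eq_right (by linarith), min_eq_right h, neg_zero]
    set Pf := t.edgeFinset.filter (fun e => u e < 0) with hPf
    have hmin : ∑ e ∈ t.edgeFinset, min (u e) 0 = ∑ e ∈ Pf, u e := by
      rw [hPf, Finset.sum_filter]
      refine Finset.sum_congr rfl fun e _ => ?_
      rcases lt_or_ge (u e) 0 with h | h
      · rw [if_pos h, min_eq_left h.le]
      · rw [if_neg (not_lt.mpr h), min_eq_right h]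
    have h1 : ∑ e ∈ t.edgeFinset, max (-u e) 0 = -∑ e ∈ Pf, u e := by
      rw [Finset.sum_congr rfl fun e _ => hmax (u e), Finset.sum_neg_distrib, hmin]
    have h2 : ∑ e ∈ Efin, -u e = -∑ e ∈ Efin, u e := Finset.sum_neg_distrib _
    have hdisj : Disjoint Pf Efin := by
      rw [Finset.disjoint_left]
      intro e heP heE
      have h3 := (Finset.mem_filter.mp heP).1
      have h4 := (Finset.mem_filter.mp heE).2
      exact h4.2.1 (SimpleGraph.mem_edgeFinset.mp h3)
    set P := Pf ∪ Efin with hP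
    have hsum_union : ∑ e ∈ P, u e = ∑ e ∈ Pf, u e + ∑ e ∈ Efin, u e :=
      Finset.sum_union hdisj
    have hmain : -B ≤ ∑ e ∈ P, u e := by
      set H : SimpleGraph (Fin n) := SimpleGraph.fromEdgeSet {f | f ∈ P ∧ u f < 0} with hH
      haveI : Fintype H.ConnectedComponent :=
        Fintype.ofSurjective H.connectedComponentMk (fun c => Quot.exists_rep c)
      have hPnd : ∀ e ∈ P, ¬ e.IsDiag := by
        intro e he
        rcases Finset.mem_union.mp he with h | h
        · exact SimpleGraph.not_isDiag_of_mem_edgeSet t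
            (SimpleGraph.mem_edgeFinset.mp (Finset.mem_filter.mp h).1)
        · exact ((Finset.mem_filter.mp h).2).1
      have hC1 : ∀ e ∈ P, u e < 0 → ∃ x y : Fin n, x < y ∧ e = s(x, y) ∧ H.Adj x y := by
        intro e
        induction e using Sym2.ind with
        | _ a c =>
          intro he hu
          have hne : a ≠ c := by
            intro h; exact hPnd _ he (by simp [h])
          have hadj : H.Adj a c := by
            rw [hH, SimpleGraph.fromEdgeSet_adj]
            exact ⟨⟨he, hu⟩, hne⟩
          rcases lt_or_gt_of_ne hne with h | h
          · exact ⟨a, c, h, rfl, hadj⟩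
          · exact ⟨c, a, h, Sym2.eq_swap, hadj.symm⟩
      -- the key combinatorial lemma
      have treelem : ∀ x y : Fin n, x ≠ y → H.Reachable x y → s(x, y) ∉ P →
          u s(x, y) ≤ 0 := by
        intro x y hxy hreach hnot
        by_contra hpos
        push_neg at hpos
        set e := s(x, y) with he
        have hsmall : ∀ f, f ∈ P → u f < 0 → lo.lt f e := by
          intro f hf huf
          by_contra hlt
          have hle : lo.le e f := not_lt.mp hlt
          have := hmono e f hle
          linarith
        set T' : SimpleGraph (Fin n) :=
          SimpleGraph.fromEdgeSet {f | f ∈ t.edgeSet ∧ lo.lt f e} with hT'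
        have hadjT' : ∀ a c : Fin n, H.Adj a c → T'.Reachable a c := by
          intro a c hab
          rw [hH, SimpleGraph.fromEdgeSet_adj] at hab
          obtain ⟨⟨hmem, hneg⟩, hne⟩ := hab
          have hge : lo.lt s(a, c) e := hsmall _ hmem hneg
          rcases Finset.mem_union.mp hmem with hmem' | hmem'
          · have htt : s(a, c) ∈ t.edgeSet :=
              SimpleGraph.mem_edgeFinset.mp (Finset.mem_filter.mp hmem').1
            refine SimpleGraph.Adj.reachable ?_
            rw [hT', SimpleGraph.fromEdgeSet_adj]
            exact ⟨⟨htt, hge⟩, hne⟩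
          · obtain ⟨-, hk⟩ := Finset.mem_filter.mp hmem'
            obtain ⟨hd, hnm, hpath⟩ := hk
            obtain ⟨w⟩ := ht.isConnected.preconnected a c
            set p := w.toPath with hp
            have hedges : ∀ f ∈ p.1.edges, f ∈ T'.edgeSet := by
              intro f hf
              have hfe1 : lo.lt f s(a, c) := hpath a c rfl p f hf
              have hfe2 : f ∈ t.edgeSet := p.1.edges_subset_edgeSet hf
              rw [hT', SimpleGraph.edgeSet_fromEdgeSet]
              exact ⟨⟨hfe2, @lt_trans _ lo.toPreorder _ _ _ hfe1 hge⟩, SimpleGraph.not_isDiag_of_mem_edgeSet t hfe2⟩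
            exact (p.1.transfer T' hedges).reachable
        have hreachT' : T'.Reachable x y := reach_of_adj_reach hadjT' hreach
        obtain ⟨w'⟩ := hreachT'
        set p' := w'.toPath with hp'
        have hp'edges : ∀ f ∈ p'.1.edges, f ∈ t.edgeSet ∧ lo.lt f e := by
          intro f hf
          have := p'.1.edges_subset_edgeSet hf
          rw [hT', SimpleGraph.edgeSet_fromEdgeSet] at this
          exact this.1
        have hmemt : ∀ f ∈ p'.1.edges, f ∈ t.edgeSet := fun f hf => (hp'edges f hf).1
        set q : t.Walk x y := p'.1.transfer t hmemt with hq
        have hq_path : q.IsPath := SimpleGraph.Walk.IsPath.transfer hmemt p'.2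
        have hq_edges : ∀ f ∈ q.edges, lo.lt f e := by
          intro f hf
          rw [hq, SimpleGraph.Walk.edges_transfer] at hf
          exact (hp'edges f hf).2
        by_cases hte : e ∈ t.edgeSet
        · have hadj : t.Adj x y := hte
          set q1 : t.Walk x y := SimpleGraph.Walk.cons hadj SimpleGraph.Walk.nil with hq1
          have hq1p : q1.IsPath := by rw [hq1]; simp [hxy]
          have huniq : q1 = q := (ht.existsUnique_path x y).unique hq1p hq_path
          have hmemq : e ∈ q.edges := by
            rw [← huniq, hq1]
            simp [he]
          exact absurd (hq_edges e hmemq) (@lt_irrefl _ lo.toPreorder _)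
        · have hk : kruskalE lo t e := by
            refine ⟨?_, hte, ?_⟩
            · rw [he]; simpa using hxy
            · intro i j hij pth f hf
              rw [he] at hij
              rcases Sym2.eq_iff.mp hij.symm with ⟨rfl, rfl⟩ | ⟨rfl, rfl⟩
              · have h5 : pth.1 = q := (ht.existsUnique_path _ _).unique pth.2 hq_path
                rw [h5] at hf
                exact hq_edges f hf
              · have h5 : pth.1 = q.reverse :=
                  (ht.existsUnique_path _ _).unique pth.2 hq_path.reverse
                rw [h5, SimpleGraph.Walk.edges_reverse, List.mem_reverse] at hf
                exact hq_edges f hf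
          exact hnot (Finset.mem_union_right _ (Finset.mem_filter.mpr ⟨Finset.mem_univ _, hk⟩))
      set cc : Fin n → H.ConnectedComponent := H.connectedComponentMk with hcc
      set Q : Finset (Fin n × Fin n) :=
        (Finset.univ ×ˢ Finset.univ).filter
          (fun q : Fin n × Fin n => q.1 < q.2 ∧ H.Reachable q.1 q.2) with hQ
      have hfibB : ∑ k : H.ConnectedComponent,
          ∑ i ∈ Finset.univ.filter (fun i => cc i = k), b i = B :=
        Finset.sum_fiberwise_of_maps_to (fun x _ => Finset.mem_univ _) b
      have hfibQ : ∑ k : H.ConnectedComponent,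
          ∑ q ∈ Q.filter (fun q => cc q.1 = k), u s(q.1, q.2)
          = ∑ q ∈ Q, u s(q.1, q.2) :=
        Finset.sum_fiberwise_of_maps_to (fun x _ => Finset.mem_univ _) _
      have hIc : ∀ k : H.ConnectedComponent,
          Q.filter (fun q => cc q.1 = k)
            = ((Finset.univ.filter (fun i => cc i = k)) ×ˢ
                (Finset.univ.filter (fun i => cc i = k))).filter
                (fun p : Fin n × Fin n => p.1 < p.2) := by
        intro k
        ext q
        simp only [hQ, Finset.mem_filter, Finset.mem_product, Finset.mem_univ, true_and]
        constructor
        · rintro ⟨⟨hlt, hr⟩, hk⟩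
          exact ⟨⟨hk, (SimpleGraph.ConnectedComponent.eq.mpr hr).symm.trans hk⟩, hlt⟩
        · rintro ⟨⟨h1, h2⟩, hlt⟩
          exact ⟨⟨hlt, SimpleGraph.ConnectedComponent.eq.mp (h1.trans h2.symm)⟩, h1⟩
      have hstep1 : -B ≤ ∑ q ∈ Q, u s(q.1, q.2) := by
        rw [← hfibQ, ← hfibB, ← Finset.sum_neg_distrib]
        refine Finset.sum_le_sum fun k _ => ?_
        rw [hIc k]
        exact hstab _
      have hstep2 : ∑ q ∈ Q, u s(q.1, q.2)
          ≤ ∑ q ∈ Q.filter (fun q => s(q.1, q.2) ∈ P), u s(q.1, q.2) := by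
        have hsplit := Finset.sum_filter_add_sum_filter_not Q
          (fun q : Fin n × Fin n => s(q.1, q.2) ∈ P) (fun q => u s(q.1, q.2))
        have hneg : ∑ q ∈ Q.filter (fun q => ¬ s(q.1, q.2) ∈ P), u s(q.1, q.2) ≤ 0 := by
          refine Finset.sum_nonpos fun q hq => ?_
          rw [Finset.mem_filter] at hq
          have hqQ := hq.1
          rw [hQ, Finset.mem_filter] at hqQ
          exact treelem q.1 q.2 (ne_of_lt hqQ.2.1) hqQ.2.2 hq.2
        linarith
      set Q1 := Q.filter (fun q => s(q.1, q.2) ∈ P) with hQ1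
      have hltQ1 : ∀ q ∈ Q1, q.1 < q.2 := by
        intro q hq
        rw [hQ1, Finset.mem_filter] at hq
        have := hq.1
        rw [hQ, Finset.mem_filter] at this
        exact this.2.1
      have hinj : ∀ q ∈ Q1, ∀ q' ∈ Q1, (s(q.1, q.2) = s(q'.1, q'.2)) → q = q' := by
        intro q hq q' hq' heq
        have h1 := hltQ1 q hq
        have h2 := hltQ1 q' hq'
        rcases Sym2.eq_iff.mp heq with ⟨ha, hb⟩ | ⟨ha, hb⟩
        · exact Prod.ext ha hb
        · exfalso
          rw [ha, hb] at h1
          exact lt_asymm h2 h1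
      have himg : ∑ q ∈ Q1, u s(q.1, q.2)
          = ∑ e ∈ Q1.image (fun q : Fin n × Fin n => s(q.1, q.2)), u e :=
        (Finset.sum_image hinj).symm
      have hsub : Q1.image (fun q : Fin n × Fin n => s(q.1, q.2)) ⊆ P := by
        intro e he
        obtain ⟨q, hq, rfl⟩ := Finset.mem_image.mp he
        exact (Finset.mem_filter.mp hq).2
      have hstep3 : ∑ e ∈ Q1.image (fun q : Fin n × Fin n => s(q.1, q.2)), u e
          ≤ ∑ e ∈ P, u e := by
        refine Finset.sum_le_sum_of_subset_of_nonneg hsub fun e heP henot => ?_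
        by_contra hneg
        push_neg at hneg
        obtain ⟨x, y, hxy, rfl, hadj⟩ := hC1 e heP hneg
        refine henot (Finset.mem_image.mpr ⟨(x, y), ?_, rfl⟩)
        rw [hQ1, Finset.mem_filter]
        refine ⟨?_, heP⟩
        rw [hQ, Finset.mem_filter]
        exact ⟨Finset.mem_product.mpr ⟨Finset.mem_univ _, Finset.mem_univ _⟩,
          hxy, hadj.reachable⟩
      linarith
    rw [h1, h2]
    linarith
  rw [hprod1, hprod2, mul_right_comm, ← Real.exp_add]
  exact mul_le_mul_of_nonneg_right (Real.exp_le_exp.mpr hkey) hC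
end
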